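/- arXiv:1511.01748 — 13 statements merged into one kernel-verified Lean document; each statement's English description precedes it below -/
import Mathlib

section
/- Let S be a nonempty finite subset of ℝⁿ, let f : S → ℝᵐ, and let x ∈ ℝⁿ \ S. Then λ(f,S)(x) := inf_{y∈ℝᵐ} max_{a∈S} ‖f(a)−y‖/‖a−x‖ satisfies λ(f,S)(x) ≤ Lip(f,S), where Lip(f,S) := sup_{a≠b∈S} ‖f(a)−f(b)‖/‖a−b‖. -/
open Finset Filter RealInnerProductSpace
set_option maxHeartbeats 1000000

private lemma key_identity {E : Type*} [NormedAddCommGroup E] [InnerProductSpace ℝ E]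
    {ι : Type*} (t : Finset ι) (w : ι → ℝ) (v : ι → E) (hw1 : ∑ i ∈ t, w i = 1) :
    ∑ i ∈ t, ∑ j ∈ t, w i * w j * ‖v i - v j‖ ^ 2
      = 2 * (∑ i ∈ t, w i * ‖v i‖ ^ 2) - 2 * ‖∑ i ∈ t, w i • v i‖ ^ 2 := by
  have hinner : ‖∑ i ∈ t, w i • v i‖ ^ 2
      = ∑ i ∈ t, ∑ j ∈ t, w i * (w j * ⟪v i, v j⟫) := by
    rw [← real_inner_self_eq_norm_sq, sum_inner]
    refine Finset.sum_congr rfl fun i _ => ?_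
    rw [real_inner_smul_left, inner_sum, Finset.mul_sum]
    exact Finset.sum_congr rfl fun j _ => by rw [real_inner_smul_right]
  have h1 : ∑ i ∈ t, ∑ j ∈ t, w i * w j * ‖v i‖ ^ 2 = ∑ i ∈ t, w i * ‖v i‖ ^ 2 := by
    refine Finset.sum_congr rfl fun i _ => ?_
    calc ∑ j ∈ t, w i * w j * ‖v i‖ ^ 2 = (w i * ‖v i‖ ^ 2) * ∑ j ∈ t, w j := by
          rw [Finset.mul_sum]; exact Finset.sum_congr rfl fun j _ => by ring
    _ = w i * ‖v i‖ ^ 2 := by rw [hw1, mul_one]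
  have h2 : ∑ i ∈ t, ∑ j ∈ t, w i * w j * ‖v j‖ ^ 2 = ∑ j ∈ t, w j * ‖v j‖ ^ 2 := by
    rw [Finset.sum_comm]
    refine Finset.sum_congr rfl fun j _ => ?_
    calc ∑ i ∈ t, w i * w j * ‖v j‖ ^ 2 = (w j * ‖v j‖ ^ 2) * ∑ i ∈ t, w i := by
          rw [Finset.mul_sum]; exact Finset.sum_congr rfl fun i _ => by ring
    _ = w j * ‖v j‖ ^ 2 := by rw [hw1, mul_one]
  calc ∑ i ∈ t, ∑ j ∈ t, w i * w j * ‖v i - v j‖ ^ 2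
      = ∑ i ∈ t, ∑ j ∈ t, (w i * w j * ‖v i‖ ^ 2 + w i * w j * ‖v j‖ ^ 2
          - 2 * (w i * (w j * ⟪v i, v j⟫))) := by
        refine Finset.sum_congr rfl fun i _ => Finset.sum_congr rfl fun j _ => ?_
        rw [norm_sub_sq_real]; ring
    _ = (∑ i ∈ t, ∑ j ∈ t, w i * w j * ‖v i‖ ^ 2)
        + (∑ i ∈ t, ∑ j ∈ t, w i * w j * ‖v j‖ ^ 2)
        - 2 * (∑ i ∈ t, ∑ j ∈ t, w i * (w j * ⟪v i, v j⟫)) := by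
        simp only [Finset.sum_add_distrib, Finset.sum_sub_distrib, Finset.mul_sum]
    _ = 2 * (∑ i ∈ t, w i * ‖v i‖ ^ 2) - 2 * ‖∑ i ∈ t, w i • v i‖ ^ 2 := by
        rw [h1, h2, hinner]; ring

/-- For a nonempty finite `S ⊆ ℝⁿ`, `f : S → ℝᵐ` and `x ∈ ℝⁿ \ S`,
`λ(f,S)(x) := inf_{y ∈ ℝᵐ} max_{a ∈ S} ‖f a - y‖ / ‖a - x‖` is at most
`Lip(f,S) := sup_{a ≠ b ∈ S} ‖f a - f b‖ / ‖a - b‖`. -/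
theorem kirszbraun_lambda_le_lip (n m : ℕ)
    (S : Finset (EuclideanSpace ℝ (Fin n))) (hS : S.Nonempty)
    (f : EuclideanSpace ℝ (Fin n) → EuclideanSpace ℝ (Fin m))
    (x : EuclideanSpace ℝ (Fin n)) (hx : x ∉ S) :
    (⨅ y : EuclideanSpace ℝ (Fin m), S.sup' hS (fun a => ‖f a - y‖ / ‖a - x‖))
      ≤ sSup {r : ℝ | ∃ a ∈ S, ∃ b ∈ S, a ≠ b ∧ r = ‖f a - f b‖ / ‖a - b‖} := by
  classical
  obtain ⟨a0, ha0⟩ := id hS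
  set L := sSup {r : ℝ | ∃ a ∈ S, ∃ b ∈ S, a ≠ b ∧ r = ‖f a - f b‖ / ‖a - b‖} with hLdef
  set g : EuclideanSpace ℝ (Fin m) → ℝ :=
    fun y => S.sup' hS (fun a => ‖f a - y‖ / ‖a - x‖) with hgdef
  have hax : ∀ a ∈ S, (0:ℝ) < ‖a - x‖ := by
    intro a ha
    rw [norm_pos_iff, sub_ne_zero]
    rintro rfl; exact hx ha
  have hg0 : ∀ y, 0 ≤ g y :=
    fun y => le_trans (div_nonneg (norm_nonneg _) (norm_nonneg _))
      (Finset.le_sup' (fun a => ‖f a - y‖ / ‖a - x‖) ha0)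
  have hbdd : BddBelow (Set.range g) := ⟨0, by rintro _ ⟨y, rfl⟩; exact hg0 y⟩
  by_cases hsing : ∀ a ∈ S, ∀ b ∈ S, a = b
  · -- singleton case
    have hempty : {r : ℝ | ∃ a ∈ S, ∃ b ∈ S, a ≠ b ∧ r = ‖f a - f b‖ / ‖a - b‖} = ∅ := by
      ext r
      simp only [Set.mem_setOf_eq, Set.mem_empty_iff_false, iff_false]
      rintro ⟨a, ha, b, hb, hne, -⟩
      exact hne (hsing a ha b hb)
    have hgle : g (f a0) ≤ 0 := by
      refine Finset.sup'_le hS _ fun a ha => ?_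
      have : a = a0 := hsing a ha a0 ha0
      simp [this]
    calc (⨅ y, g y) ≤ g (f a0) := ciInf_le hbdd _
      _ ≤ 0 := hgle
      _ = L := by rw [hLdef, hempty, Real.sSup_empty]
  · push_neg at hsing
    obtain ⟨a1, ha1, b1, hb1, hne1⟩ := hsing
    have hfin : {r : ℝ | ∃ a ∈ S, ∃ b ∈ S, a ≠ b ∧ r = ‖f a - f b‖ / ‖a - b‖}.Finite := by
      apply Set.Finite.subset (Set.Finite.image
        (fun p : _ × _ => ‖f p.1 - f p.2‖ / ‖p.1 - p.2‖) (S.finite_toSet.prod S.finite_toSet))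
      rintro r ⟨a, ha, b, hb, -, rfl⟩
      exact ⟨(a, b), ⟨ha, hb⟩, rfl⟩
    have hbddA : BddAbove {r : ℝ | ∃ a ∈ S, ∃ b ∈ S, a ≠ b ∧ r = ‖f a - f b‖ / ‖a - b‖} :=
      hfin.bddAbove
    have hLmem : ∀ a ∈ S, ∀ b ∈ S, a ≠ b → ‖f a - f b‖ / ‖a - b‖ ≤ L :=
      fun a ha b hb hne => le_csSup hbddA ⟨a, ha, b, hb, hne, rfl⟩
    have hL0 : 0 ≤ L :=
      le_trans (div_nonneg (norm_nonneg _) (norm_nonneg _)) (hLmem a1 ha1 b1 hb1 hne1)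
    have hLip : ∀ a ∈ S, ∀ b ∈ S, ‖f a - f b‖ ≤ L * ‖a - b‖ := by
      intro a ha b hb
      rcases eq_or_ne a b with rfl | hne
      · simp
      · have h := hLmem a ha b hb hne
        have hb0 : (0:ℝ) < ‖a - b‖ := norm_pos_iff.2 (sub_ne_zero.2 hne)
        rw [div_le_iff₀ hb0] at h
        exact h
    -- continuity and coercivity, minimizer
    have hgc : Continuous g := by
      rw [continuous_iff_continuousAt]
      intro y
      exact ContinuousAt.finset_sup'_apply hS fun a _ =>
        (((continuous_const.sub continuous_id).norm.div_const _).continuousAt)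
    have hco : Tendsto g (cocompact _) atTop := by
      have hlow : Tendsto (fun y : EuclideanSpace ℝ (Fin m) => (‖y‖ - ‖f a0‖) / ‖a0 - x‖)
          (cocompact _) atTop := by
        apply Tendsto.atTop_div_const (hax a0 ha0)
        simpa [sub_eq_add_neg] using
          tendsto_atTop_add_const_right (cocompact _) (-‖f a0‖) tendsto_norm_cocompact_atTop
      apply tendsto_atTop_mono _ hlow
      intro y
      refine le_trans ?_ (Finset.le_sup' (fun a => ‖f a - y‖ / ‖a - x‖) ha0)
      gcongr
      exact le_trans (norm_sub_norm_le y (f a0)) (le_of_eq (norm_sub_rev _ _))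
    obtain ⟨y0, hy0min⟩ := hgc.exists_forall_le hco
    set M := g y0 with hMdef
    suffices hML : M ≤ L by exact le_trans (ciInf_le hbdd y0) hML
    by_contra hcon
    push_neg at hcon
    have hM0 : 0 < M := lt_of_le_of_lt hL0 hcon
    have hub : ∀ a ∈ S, ‖f a - y0‖ ≤ M * ‖a - x‖ := by
      intro a ha
      have h := Finset.le_sup' (fun a => ‖f a - y0‖ / ‖a - x‖) ha
      rwa [div_le_iff₀ (hax a ha)] at h
    set T := S.filter (fun a => ‖f a - y0‖ = M * ‖a - x‖) with hTdef
    have hTS : T ⊆ S := Finset.filter_subset _ _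
    obtain ⟨am, hamS, ham⟩ := Finset.exists_mem_eq_sup' hS (fun a => ‖f a - y0‖ / ‖a - x‖)
    have hamT : am ∈ T := by
      refine Finset.mem_filter.2 ⟨hamS, ?_⟩
      have : ‖f am - y0‖ / ‖am - x‖ = M := ham.symm
      rwa [div_eq_iff (hax am hamS).ne'] at this
    have hy0hull : y0 ∈ convexHull ℝ (f '' (T : Set _)) := by
      by_contra hnot
      have hcl : IsClosed (convexHull ℝ (f '' (T : Set _))) :=
        (T.finite_toSet.image f).isClosed_convexHull (𝕜 := ℝ)
      obtain ⟨φ, u, hu1, hu2⟩ :=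
        geometric_hahn_banach_point_closed (convex_convexHull ℝ _) hcl hnot
      set v := (InnerProductSpace.toDual ℝ (EuclideanSpace ℝ (Fin m))).symm φ with hvdef
      have hvw : ∀ w, ⟪v, w⟫ = φ w := fun w => InnerProductSpace.toDual_symm_apply
      set δ := u - φ y0 with hδdef
      have hδ0 : 0 < δ := sub_pos.2 hu1
      have hvlb : ∀ a ∈ T, δ < ⟪v, f a - y0⟫ := by
        intro a ha
        have h := hu2 (f a) (subset_convexHull ℝ _ ⟨a, ha, rfl⟩)
        rw [hvw, map_sub]
        simp only [hδdef]
        linarith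
      have hvne : v ≠ 0 := by
        intro h0
        have h := hvlb am hamT
        rw [h0, inner_zero_left] at h
        linarith
      have hvpos : (0:ℝ) < ‖v‖ := norm_pos_iff.2 hvne
      set P := insert (1:ℝ) ((S \ T).image (fun a => M * ‖a - x‖ - ‖f a - y0‖)) with hPdef
      have hPne : P.Nonempty := ⟨1, Finset.mem_insert_self _ _⟩
      set ρ := P.min' hPne with hρdef
      have hρ0 : 0 < ρ := by
        rw [hρdef, Finset.lt_min'_iff]
        intro b hb
        rcases Finset.mem_insert.1 hb with rfl | hb
        · norm_num
        · obtain ⟨a, haST, rfl⟩ := Finset.mem_image.1 hb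
          have haS : a ∈ S := (Finset.mem_sdiff.1 haST).1
          have haT : a ∉ T := (Finset.mem_sdiff.1 haST).2
          have hne : ‖f a - y0‖ ≠ M * ‖a - x‖ := fun h => haT (Finset.mem_filter.2 ⟨haS, h⟩)
          exact sub_pos.2 (lt_of_le_of_ne (hub a haS) hne)
      set τ := min (δ / (2 * ‖v‖ ^ 2)) (ρ / (2 * ‖v‖)) with hτdef
      have hτ0 : 0 < τ := lt_min (div_pos hδ0 (by positivity)) (div_pos hρ0 (by positivity))
      have hτ1 : τ * ‖v‖ ^ 2 ≤ δ / 2 := by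
        have h := min_le_left (δ / (2 * ‖v‖ ^ 2)) (ρ / (2 * ‖v‖))
        calc τ * ‖v‖ ^ 2 ≤ δ / (2 * ‖v‖ ^ 2) * ‖v‖ ^ 2 := by
              exact mul_le_mul_of_nonneg_right h (sq_nonneg _)
          _ = δ / 2 := by field_simp
      have hτ2 : τ * ‖v‖ < ρ := by
        have h := min_le_right (δ / (2 * ‖v‖ ^ 2)) (ρ / (2 * ‖v‖))
        calc τ * ‖v‖ ≤ ρ / (2 * ‖v‖) * ‖v‖ := mul_le_mul_of_nonneg_right h (norm_nonneg _)
          _ = ρ / 2 := by field_simp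
          _ < ρ := by linarith
      set y1 := y0 + τ • v with hy1def
      have hsub : ∀ a, f a - y1 = (f a - y0) - τ • v := by
        intro a; rw [hy1def]; abel
      have hstep : ∀ a ∈ S, ‖f a - y1‖ / ‖a - x‖ < M := by
        intro a ha
        rw [div_lt_iff₀ (hax a ha)]
        by_cases haT : a ∈ T
        · have hact : ‖f a - y0‖ = M * ‖a - x‖ := (Finset.mem_filter.1 haT).2
          have hsq : ‖f a - y1‖ ^ 2 < ‖f a - y0‖ ^ 2 := by
            rw [hsub a, norm_sub_sq_real]
            have hip : ⟪f a - y0, τ • v⟫ = τ * ⟪v, f a - y0⟫ := by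
              rw [real_inner_smul_right, real_inner_comm]
            have h1 := hvlb a haT
            have h2 : ‖τ • v‖ ^ 2 = τ ^ 2 * ‖v‖ ^ 2 := by
              rw [norm_smul, Real.norm_eq_abs, abs_of_pos hτ0, mul_pow]
            rw [hip, h2]
            nlinarith [hτ0, hτ1, hδ0]
          have hlt : ‖f a - y1‖ < ‖f a - y0‖ :=
            (pow_lt_pow_iff_left₀ (norm_nonneg _) (norm_nonneg _) two_ne_zero).1 hsq
          calc ‖f a - y1‖ < ‖f a - y0‖ := hlt
            _ = M * ‖a - x‖ := hact
        · have hslack : M * ‖a - x‖ - ‖f a - y0‖ ∈ P :=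
            Finset.mem_insert_of_mem
              (Finset.mem_image.2 ⟨a, Finset.mem_sdiff.2 ⟨ha, haT⟩, rfl⟩)
          have hρle : ρ ≤ M * ‖a - x‖ - ‖f a - y0‖ := Finset.min'_le _ _ hslack
          have hn : ‖f a - y1‖ ≤ ‖f a - y0‖ + τ * ‖v‖ := by
            rw [hsub a]
            calc ‖(f a - y0) - τ • v‖ ≤ ‖f a - y0‖ + ‖τ • v‖ := norm_sub_le _ _
              _ = ‖f a - y0‖ + τ * ‖v‖ := by
                  rw [norm_smul, Real.norm_eq_abs, abs_of_pos hτ0]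
          linarith
      have hlt : g y1 < M := (Finset.sup'_lt_iff hS).2 hstep
      exact absurd (hy0min y1) (not_le.2 hlt)
    -- quantitative part
    rw [_root_.convexHull_eq] at hy0hull
    obtain ⟨ι, t, w, z, hw0, hw1, hz, hy0c⟩ := hy0hull
    rw [Finset.centerMass_eq_of_sum_1 _ _ hw1] at hy0c
    have hchoice : ∀ i, ∃ a, i ∈ t → a ∈ T ∧ f a = z i := by
      intro i
      by_cases hi : i ∈ t
      · obtain ⟨a, haT, hfa⟩ := hz i hi
        exact ⟨a, fun _ => ⟨haT, hfa⟩⟩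
      · exact ⟨x, fun h => absurd h hi⟩
    choose p hp using hchoice
    have hpT : ∀ i ∈ t, p i ∈ T := fun i hi => (hp i hi).1
    have hpS : ∀ i ∈ t, p i ∈ S := fun i hi => hTS (hpT i hi)
    have hfz : ∀ i ∈ t, f (p i) = z i := fun i hi => (hp i hi).2
    have hact : ∀ i ∈ t, ‖z i - y0‖ = M * ‖p i - x‖ := by
      intro i hi
      rw [← hfz i hi]
      exact (Finset.mem_filter.1 (hpT i hi)).2
    set Q := ∑ i ∈ t, w i * ‖p i - x‖ ^ 2 with hQdef
    have hQpos : 0 < Q := by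
      have hex : ∃ i ∈ t, 0 < w i := by
        by_contra h
        push_neg at h
        have hzero : ∑ i ∈ t, w i = 0 :=
          Finset.sum_eq_zero fun i hi => le_antisymm (h i hi) (hw0 i hi)
        rw [hw1] at hzero
        norm_num at hzero
      obtain ⟨i0, hi0, hwi0⟩ := hex
      have hpos : 0 < w i0 * ‖p i0 - x‖ ^ 2 :=
        mul_pos hwi0 (pow_pos (hax _ (hpS i0 hi0)) 2)
      exact lt_of_lt_of_le hpos
        (Finset.single_le_sum (f := fun i => w i * ‖p i - x‖ ^ 2)
          (fun i hi => mul_nonneg (hw0 i hi) (sq_nonneg _)) hi0)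
    have hid1 := key_identity t w (fun i => z i - y0) hw1
    have hzero : ∑ i ∈ t, w i • (z i - y0) = 0 := by
      simp only [smul_sub]
      rw [Finset.sum_sub_distrib, hy0c, ← Finset.sum_smul, hw1, one_smul, sub_self]
    rw [hzero, norm_zero] at hid1
    have hid1' : ∑ i ∈ t, ∑ j ∈ t, w i * w j * ‖z i - z j‖ ^ 2
        = 2 * ∑ i ∈ t, w i * ‖z i - y0‖ ^ 2 := by
      have heq : ∀ i j : ι, (z i - y0) - (z j - y0) = z i - z j := fun i j => by abel
      simp only [heq] at hid1
      rw [hid1]; ring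
    have hsum1 : ∑ i ∈ t, w i * ‖z i - y0‖ ^ 2 = M ^ 2 * Q := by
      rw [hQdef, Finset.mul_sum]
      refine Finset.sum_congr rfl fun i hi => ?_
      rw [hact i hi]; ring
    have hid2 := key_identity t w (fun i => p i - x) hw1
    have hid2' : ∑ i ∈ t, ∑ j ∈ t, w i * w j * ‖p i - p j‖ ^ 2 ≤ 2 * Q := by
      have heq : ∀ i j : _, (p i - x) - (p j - x) = p i - p j := fun i j => by abel
      simp only [heq] at hid2
      have h0 : 0 ≤ 2 * ‖∑ i ∈ t, w i • (p i - x)‖ ^ 2 := by positivity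
      rw [hQdef]
      linarith [hid2, h0]
    have hpair : ∀ i ∈ t, ∀ j ∈ t, w i * w j * ‖z i - z j‖ ^ 2
        ≤ L ^ 2 * (w i * w j * ‖p i - p j‖ ^ 2) := by
      intro i hi j hj
      have h1 : ‖z i - z j‖ ≤ L * ‖p i - p j‖ := by
        rw [← hfz i hi, ← hfz j hj]
        exact hLip _ (hpS i hi) _ (hpS j hj)
      have h2 : ‖z i - z j‖ ^ 2 ≤ L ^ 2 * ‖p i - p j‖ ^ 2 := by
        nlinarith [norm_nonneg (z i - z j), norm_nonneg (p i - p j), hL0]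
      have h3 : 0 ≤ w i * w j := mul_nonneg (hw0 i hi) (hw0 j hj)
      nlinarith [h2, h3]
    have hfinal : 2 * (M ^ 2 * Q) ≤ L ^ 2 * (2 * Q) := by
      calc 2 * (M ^ 2 * Q) = ∑ i ∈ t, ∑ j ∈ t, w i * w j * ‖z i - z j‖ ^ 2 := by
            rw [hid1', hsum1]
        _ ≤ ∑ i ∈ t, ∑ j ∈ t, L ^ 2 * (w i * w j * ‖p i - p j‖ ^ 2) :=
            Finset.sum_le_sum fun i hi => Finset.sum_le_sum fun j hj => hpair i hi j hj
        _ = L ^ 2 * ∑ i ∈ t, ∑ j ∈ t, w i * w j * ‖p i - p j‖ ^ 2 := by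
            rw [Finset.mul_sum]
            exact Finset.sum_congr rfl fun i _ => (Finset.mul_sum _ _ _).symm
        _ ≤ L ^ 2 * (2 * Q) := mul_le_mul_of_nonneg_left hid2' (sq_nonneg L)
    nlinarith [hfinal, hQpos, hcon, hL0, mul_pos (sub_pos.2 hcon) hQpos]
end

section
/- Let S be a nonempty finite subset of ℝⁿ, f : S → ℝᵐ, and x ∈ ℝⁿ \ S. Then there exists a unique point y(x) ∈ ℝᵐ such that max_{a∈S} ‖f(a)−y(x)‖/‖a−x‖ = λ(f,S)(x), i.e., the function y ↦ max_{a∈S} ‖f(a)−y‖/‖a−x‖ attains its infimum over ℝᵐ at exactly one point. -/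
/-- For a nonempty finite `S ⊆ ℝⁿ`, `f : S → ℝᵐ` and `x ∈ ℝⁿ \ S`,
the function `y ↦ max_{a ∈ S} ‖f a - y‖ / ‖a - x‖` attains its infimum over `ℝᵐ`
at exactly one point `y(x)`. -/
theorem kirszbraun_unique_minimizer (n m : ℕ)
    (S : Finset (EuclideanSpace ℝ (Fin n))) (hS : S.Nonempty)
    (f : EuclideanSpace ℝ (Fin n) → EuclideanSpace ℝ (Fin m))
    (x : EuclideanSpace ℝ (Fin n)) (hx : x ∉ S) :
    ∃! y : EuclideanSpace ℝ (Fin m),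
      (S.sup' hS (fun a => ‖f a - y‖ / ‖a - x‖))
        = ⨅ z : EuclideanSpace ℝ (Fin m), S.sup' hS (fun a => ‖f a - z‖ / ‖a - x‖) := by
  set F : EuclideanSpace ℝ (Fin m) → ℝ :=
    fun y => S.sup' hS (fun a => ‖f a - y‖ / ‖a - x‖) with hFdef
  have hc : ∀ a ∈ S, 0 < ‖a - x‖ := by
    intro a ha
    rw [norm_pos_iff, sub_ne_zero]
    exact fun h => hx (h ▸ ha)
  have hFnonneg : ∀ y, 0 ≤ F y := by
    intro y
    obtain ⟨a, ha⟩ := hS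
    exact le_trans (div_nonneg (norm_nonneg _) (norm_nonneg _))
      (Finset.le_sup' (fun a => ‖f a - y‖ / ‖a - x‖) ha)
  have hbdd : BddBelow (Set.range F) := by
    refine ⟨0, ?_⟩
    rintro _ ⟨y, rfl⟩
    exact hFnonneg y
  -- continuity
  have hFcont : Continuous F := by
    apply Continuous.finset_sup'_apply hS
    intro a _
    exact (continuous_const.sub continuous_id).norm.div_const _
  -- existence of a global minimizer
  obtain ⟨a0, ha0⟩ := hS
  set R : ℝ := (F (f a0) + 1) * ‖a0 - x‖ with hR
  have hball : (Metric.closedBall (f a0) R).Nonempty := by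
    refine ⟨f a0, Metric.mem_closedBall_self ?_⟩
    have := hFnonneg (f a0)
    have := norm_nonneg (a0 - x)
    positivity
  obtain ⟨y0, hy0mem, hy0min⟩ :=
    (isCompact_closedBall (f a0) R).exists_isMinOn hball hFcont.continuousOn
  have hglobal : ∀ z, F y0 ≤ F z := by
    intro z
    by_cases hz : z ∈ Metric.closedBall (f a0) R
    · exact hy0min hz
    · have h1 : F y0 ≤ F (f a0) := hy0min (Metric.mem_closedBall_self (by have := hFnonneg (f a0); have := norm_nonneg (a0 - x); positivity))
      have h2 : R < ‖f a0 - z‖ := by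
        rw [Metric.mem_closedBall, not_le, dist_eq_norm] at hz
        rwa [norm_sub_rev]
      have h3 : F (f a0) + 1 ≤ F z := by
        have : (F (f a0) + 1) ≤ ‖f a0 - z‖ / ‖a0 - x‖ := by
          rw [le_div_iff₀ (hc a0 ha0)]
          exact le_of_lt h2
        exact this.trans (Finset.le_sup' (fun a => ‖f a - z‖ / ‖a - x‖) ha0)
      linarith
  have hiInf : F y0 = ⨅ z, F z := by
    refine le_antisymm (le_ciInf hglobal) (ciInf_le hbdd y0)
  refine ⟨y0, hiInf, ?_⟩
  -- uniqueness
  intro y1 hy1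
  by_contra hne
  set lam : ℝ := ⨅ z, F z with hlam
  have hlam0 : 0 ≤ lam := le_ciInf hFnonneg
  have hd : 0 < ‖y1 - y0‖ := by
    rw [norm_pos_iff, sub_ne_zero]; exact hne
  set mid : EuclideanSpace ℝ (Fin m) := (2:ℝ)⁻¹ • (y1 + y0) with hmid
  have key : ∀ a ∈ S, ‖f a - mid‖ / ‖a - x‖ < lam := by
    intro a ha
    have h1 : ‖f a - y1‖ ≤ lam * ‖a - x‖ := by
      have h := Finset.le_sup' (fun a => ‖f a - y1‖ / ‖a - x‖) ha
      rw [hy1] at h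
      exact (div_le_iff₀ (hc a ha)).1 h
    have h0 : ‖f a - y0‖ ≤ lam * ‖a - x‖ := by
      have h := Finset.le_sup' (fun a => ‖f a - y0‖ / ‖a - x‖) ha
      exact (div_le_iff₀ (hc a ha)).1 (h.trans_eq hiInf)
    have hpar := parallelogram_law_with_norm ℝ (f a - y1) (f a - y0)
    have hsum : f a - y1 + (f a - y0) = (2:ℝ) • (f a - mid) := by
      rw [hmid]
      module
    have hdiff : f a - y1 - (f a - y0) = y0 - y1 := by abel
    rw [hsum, hdiff, norm_smul] at hpar
    have hnn : (0:ℝ) ≤ lam * ‖a - x‖ :=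
      mul_nonneg hlam0 (norm_nonneg _)
    have hsq : ‖f a - mid‖ ^ 2 < (lam * ‖a - x‖) ^ 2 := by
      have e1 : ‖f a - y1‖ * ‖f a - y1‖ ≤ (lam * ‖a - x‖) ^ 2 := by
        nlinarith [norm_nonneg (f a - y1)]
      have e0 : ‖f a - y0‖ * ‖f a - y0‖ ≤ (lam * ‖a - x‖) ^ 2 := by
        nlinarith [norm_nonneg (f a - y0)]
      have h2 : ‖(2:ℝ)‖ = 2 := by norm_num
      rw [h2] at hpar
      have hd2 : 0 < ‖y0 - y1‖ := by rwa [norm_sub_rev]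
      nlinarith [hd2, norm_nonneg (f a - mid)]
    have hlt : ‖f a - mid‖ < lam * ‖a - x‖ := by
      nlinarith [norm_nonneg (f a - mid)]
    rwa [div_lt_iff₀ (hc a ha)]
  have : F mid < lam := (Finset.sup'_lt_iff ⟨a0, ha0⟩).2 key
  have : lam ≤ F mid := ciInf_le hbdd mid
  linarith
end

section
/- Let S be a nonempty finite subset of ℝⁿ, f : S → ℝᵐ, x ∈ ℝⁿ \ S, and let K(f,S)(x) denote the unique minimizer of y ↦ max_{a∈S} ‖f(a)−y‖/‖a−x‖. Then the set B = { f(z) : z ∈ S and ‖f(z)−K(f,S)(x)‖/‖z−x‖ = λ(f,S)(x) } is nonempty, and K(f,S)(x) belongs to the convex hull of B. -/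
open scoped RealInnerProductSpace


/-- For a nonempty finite `S ⊆ ℝⁿ`, `f : S → ℝᵐ`, `x ∈ ℝⁿ \ S`, and `K`
the (unique) minimizer of `y ↦ max_{a ∈ S} ‖f a - y‖ / ‖a - x‖`, the set
`B = {f z : z ∈ S, ‖f z - K‖/‖z - x‖ = λ(f,S)(x)}` is nonempty and `K` belongs to the
convex hull of `B`. -/
theorem kirszbraun_value_in_convexHull (n m : ℕ)
    (S : Finset (EuclideanSpace ℝ (Fin n))) (hS : S.Nonempty)
    (f : EuclideanSpace ℝ (Fin n) → EuclideanSpace ℝ (Fin m))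
    (x : EuclideanSpace ℝ (Fin n)) (hx : x ∉ S)
    (K : EuclideanSpace ℝ (Fin m))
    (hK : ∀ z : EuclideanSpace ℝ (Fin m),
      (S.sup' hS (fun a => ‖f a - K‖ / ‖a - x‖))
        ≤ S.sup' hS (fun a => ‖f a - z‖ / ‖a - x‖)) :
    ({p : EuclideanSpace ℝ (Fin m) | ∃ z ∈ S,
        ‖f z - K‖ / ‖z - x‖
          = (⨅ y : EuclideanSpace ℝ (Fin m), S.sup' hS (fun a => ‖f a - y‖ / ‖a - x‖))
        ∧ p = f z}).Nonempty ∧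
    K ∈ convexHull ℝ {p : EuclideanSpace ℝ (Fin m) | ∃ z ∈ S,
        ‖f z - K‖ / ‖z - x‖
          = (⨅ y : EuclideanSpace ℝ (Fin m), S.sup' hS (fun a => ‖f a - y‖ / ‖a - x‖))
        ∧ p = f z} := by
  set g : EuclideanSpace ℝ (Fin m) → EuclideanSpace ℝ (Fin n) → ℝ :=
    fun y a => ‖f a - y‖ / ‖a - x‖ with hg
  set L : ℝ := S.sup' hS (g K) with hL
  -- the infimum equals the value at K
  have hbdd : BddBelow (Set.range fun y => S.sup' hS (g y)) := by
    refine ⟨0, ?_⟩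
    rintro r ⟨y, rfl⟩
    obtain ⟨a, ha⟩ := hS
    exact le_trans (div_nonneg (norm_nonneg _) (norm_nonneg _))
      (Finset.le_sup' (g y) ha)
  have hiInf : (⨅ y : EuclideanSpace ℝ (Fin m), S.sup' hS (fun a => ‖f a - y‖ / ‖a - x‖)) = L := by
    refine le_antisymm (ciInf_le hbdd K) (le_ciInf fun y => hK y)
  rw [hiInf]
  set B : Set (EuclideanSpace ℝ (Fin m)) :=
    {p | ∃ z ∈ S, ‖f z - K‖ / ‖z - x‖ = L ∧ p = f z} with hB
  have hax : ∀ a ∈ S, (0:ℝ) < ‖a - x‖ := by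
    intro a ha
    rw [norm_pos_iff, sub_ne_zero]
    rintro rfl; exact hx ha
  -- B is nonempty
  obtain ⟨a₀, ha₀, hga₀⟩ := Finset.exists_mem_eq_sup' hS (g K)
  have hBne : B.Nonempty := ⟨f a₀, a₀, ha₀, hga₀.symm, rfl⟩
  refine ⟨hBne, ?_⟩
  by_contra hKB
  -- separate K from the convex hull of B
  have hBfin : B.Finite := by
    apply (S.finite_toSet.image f).subset
    rintro p ⟨z, hz, -, rfl⟩
    exact ⟨z, hz, rfl⟩
  obtain ⟨φ, u, hφK, hφB⟩ :=
    geometric_hahn_banach_point_closed (convex_convexHull ℝ B)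
      (hBfin.isClosed_convexHull (𝕜 := ℝ)) hKB
  set v : EuclideanSpace ℝ (Fin m) :=
    (InnerProductSpace.toDual ℝ (EuclideanSpace ℝ (Fin m))).symm φ with hv
  have hvinner : ∀ y, ⟪v, y⟫ = φ y := fun y => InnerProductSpace.toDual_symm_apply
  set δ : ℝ := u - φ K with hδ
  have hδpos : 0 < δ := sub_pos.mpr hφK
  have hinner : ∀ p ∈ B, δ ≤ ⟪p - K, v⟫ := by
    intro p hp
    have := hφB p (subset_convexHull ℝ B hp)
    have h1 : ⟪v, p - K⟫ = φ p - φ K := by rw [hvinner, map_sub]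
    rw [real_inner_comm, h1]
    linarith
  -- for each a ∈ S, eventually (t → 0⁺) the ratio at K + t • v is < L
  have hev : ∀ a ∈ S, ∀ᶠ t in nhdsWithin (0:ℝ) (Set.Ioi 0),
      ‖f a - (K + t • v)‖ / ‖a - x‖ < L := by
    intro a ha
    rcases eq_or_lt_of_le (Finset.le_sup' (g K) ha : g K a ≤ L) with heq | hlt
    · -- active point: strict decrease of the distance
      have hfa : f a ∈ B := ⟨a, ha, heq, rfl⟩
      have hd := hinner (f a) hfa
      have hmem : ∀ᶠ t in nhdsWithin (0:ℝ) (Set.Ioi 0),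
          t ∈ Set.Ioo 0 (δ / (‖v‖^2 + 1)) := by
        have : Set.Ioo (0:ℝ) (δ / (‖v‖^2 + 1)) ∈ nhdsWithin (0:ℝ) (Set.Ioi 0) :=
          Ioo_mem_nhdsGT_of_mem ⟨le_refl _, by positivity⟩
        exact this
      filter_upwards [hmem] with t ht
      obtain ⟨ht0, ht1⟩ := ht
      have hsq : ‖f a - (K + t • v)‖^2 < ‖f a - K‖^2 := by
        have hexp : ‖f a - (K + t • v)‖^2
            = ‖f a - K‖^2 - 2 * t * ⟪f a - K, v⟫ + t^2 * ‖v‖^2 := by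
          have : f a - (K + t • v) = (f a - K) - t • v := by abel
          rw [this, @norm_sub_sq_real, real_inner_smul_right, norm_smul]
          simp [Real.norm_eq_abs, abs_of_pos ht0]
          ring
        have hts : t * ‖v‖^2 < δ := by
          calc t * ‖v‖^2 ≤ t * (‖v‖^2 + 1) := by nlinarith
            _ < (δ / (‖v‖^2 + 1)) * (‖v‖^2 + 1) := by
                apply mul_lt_mul_of_pos_right ht1; positivity
            _ = δ := by field_simp
        nlinarith
      have hlt' : ‖f a - (K + t • v)‖ < ‖f a - K‖ :=
        lt_of_pow_lt_pow_left₀ 2 (norm_nonneg _) hsq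
      calc ‖f a - (K + t • v)‖ / ‖a - x‖ < ‖f a - K‖ / ‖a - x‖ := by
            gcongr; exact hax a ha
        _ = L := heq
    · -- inactive point: continuity
      have hcont : Filter.Tendsto (fun t : ℝ => ‖f a - (K + t • v)‖ / ‖a - x‖)
          (nhdsWithin (0:ℝ) (Set.Ioi 0)) (nhds (‖f a - K‖ / ‖a - x‖)) := by
        have hc : Continuous (fun t : ℝ => ‖f a - (K + t • v)‖ / ‖a - x‖) :=
          ((continuous_const.sub
            (continuous_const.add (continuous_id.smul continuous_const))).norm).div_const _
        have := hc.tendsto 0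
        simp only [zero_smul, add_zero] at this
        exact this.mono_left nhdsWithin_le_nhds
      exact hcont.eventually_lt_const hlt
  obtain ⟨t, ht⟩ := ((Filter.eventually_all_finset S).mpr hev).exists
  have : L < L := lt_of_le_of_lt (hK (K + t • v)) ((Finset.sup'_lt_iff hS).mpr ht)
  exact lt_irrefl _ this
end

section
/- Let S be a nonempty finite subset of ℝⁿ, u : S → ℝ a real-valued function, and x ∈ ℝⁿ \ S, and suppose u₀ ∈ ℝ satisfies u₀ = K(u,S)(x), i.e., u₀ uniquely minimizes y ↦ max_{a∈S} |u(a)−y|/‖a−x‖. Then max_{a∈S} (u(a)−u₀)/‖a−x‖ = max_{a∈S} (u₀−u(a))/‖a−x‖ = λ(u,S)(x); in particular the maximal upward slope from (x,u₀) to the data equals the maximal downward slope. -/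
private lemma aux_le {α : Type*} (S : Finset α) (hS : S.Nonempty) (v d : α → ℝ)
    (hd : ∀ a ∈ S, 0 < d a)
    (hmin : ∀ z : ℝ, S.sup' hS (fun a => |v a| / d a) ≤ S.sup' hS (fun a => |v a - z| / d a)) :
    S.sup' hS (fun a => |v a| / d a) ≤ S.sup' hS (fun a => v a / d a) := by
  by_contra hlt
  push_neg at hlt
  set f := S.sup' hS (fun a => |v a| / d a) with hf
  set g := S.sup' hS (fun a => v a / d a) with hg
  set M := S.sup' hS (fun a => (d a)⁻¹) with hM
  have hM0 : 0 < M := by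
    obtain ⟨a, ha⟩ := hS
    exact lt_of_lt_of_le (inv_pos.mpr (hd a ha)) (Finset.le_sup' (fun a => (d a)⁻¹) ha)
  set ε := (f - g) / (2 * M) with hε
  have hε0 : 0 < ε := div_pos (by linarith) (by linarith)
  have key : f ≤ S.sup' hS (fun a => |v a + ε| / d a) := by
    have := hmin (-ε)
    simpa [sub_neg_eq_add] using this
  have hub : S.sup' hS (fun a => |v a + ε| / d a) < f := by
    rw [Finset.sup'_lt_iff]
    intro a ha
    have hda := hd a ha
    have hεM : ε * M = (f - g) / 2 := by
      rw [hε]; field_simp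
    rcases abs_cases (v a + ε) with ⟨he, _⟩ | ⟨he, _⟩
    · have h1 : v a / d a ≤ g := Finset.le_sup' (fun a => v a / d a) ha
      have h2 : (d a)⁻¹ ≤ M := Finset.le_sup' (fun a => (d a)⁻¹) ha
      have h3 : (v a + ε) / d a = v a / d a + ε * (d a)⁻¹ := by
        field_simp
      have h4 : ε * (d a)⁻¹ ≤ ε * M := by nlinarith
      rw [he, h3]
      linarith
    · have h1 : |v a| / d a ≤ f := Finset.le_sup' (fun a => |v a| / d a) ha
      have h2 : -(v a + ε) ≤ |v a| - ε := by
        have := neg_le_abs (v a); linarith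
      have h3 : |v a + ε| / d a ≤ (|v a| - ε) / d a := by
        rw [he]; exact div_le_div_of_nonneg_right h2 hda.le
      have h4 : (|v a| - ε) / d a = |v a| / d a - ε * (d a)⁻¹ := by
        field_simp
      have h5 : 0 < ε * (d a)⁻¹ := mul_pos hε0 (inv_pos.mpr hda)
      calc |v a + ε| / d a ≤ |v a| / d a - ε * (d a)⁻¹ := by rw [← h4]; exact h3
        _ < f := by linarith
  exact absurd key (not_le.mpr hub)

/-- For a nonempty finite `S ⊆ ℝⁿ`, `u : S → ℝ`, `x ∈ ℝⁿ \ S`, and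
`u₀ = K(u,S)(x)` the (unique) minimizer of `y ↦ max_{a ∈ S} |u a - y| / ‖a - x‖`, one has
`max_{a∈S} (u a - u₀)/‖a - x‖ = λ(u,S)(x)` and `max_{a∈S} (u₀ - u a)/‖a - x‖ = λ(u,S)(x)`. -/
theorem kirszbraun_real_up_down_slopes (n : ℕ)
    (S : Finset (EuclideanSpace ℝ (Fin n))) (hS : S.Nonempty)
    (u : EuclideanSpace ℝ (Fin n) → ℝ)
    (x : EuclideanSpace ℝ (Fin n)) (hx : x ∉ S)
    (u₀ : ℝ)
    (hu₀ : ∀ z : ℝ,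
      (S.sup' hS (fun a => |u a - u₀| / ‖a - x‖))
        ≤ S.sup' hS (fun a => |u a - z| / ‖a - x‖)) :
    (S.sup' hS (fun a => (u a - u₀) / ‖a - x‖))
        = (⨅ y : ℝ, S.sup' hS (fun a => |u a - y| / ‖a - x‖)) ∧
    (S.sup' hS (fun a => (u₀ - u a) / ‖a - x‖))
        = (⨅ y : ℝ, S.sup' hS (fun a => |u a - y| / ‖a - x‖)) := by
  have hd : ∀ a ∈ S, 0 < ‖a - x‖ := by
    intro a ha
    have hax : a ≠ x := fun h => hx (h ▸ ha)
    simpa [sub_ne_zero] using norm_pos_iff.mpr (sub_ne_zero.mpr hax)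
  set F := S.sup' hS (fun a => |u a - u₀| / ‖a - x‖) with hF
  -- the infimum equals F
  have hinf : (⨅ y : ℝ, S.sup' hS (fun a => |u a - y| / ‖a - x‖)) = F := by
    apply le_antisymm
    · exact ciInf_le ⟨F, by rintro r ⟨y, rfl⟩; exact hu₀ y⟩ u₀
    · exact le_ciInf hu₀
  -- first equality
  have h1 : S.sup' hS (fun a => (u a - u₀) / ‖a - x‖) = F := by
    apply le_antisymm
    · apply Finset.sup'_le
      intro a ha
      exact le_trans (div_le_div_of_nonneg_right (le_abs_self _) (hd a ha).le)
        (Finset.le_sup' (fun a => |u a - u₀| / ‖a - x‖) ha)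
    · have hmin1 : ∀ z : ℝ, S.sup' hS (fun a => |u a - u₀| / ‖a - x‖)
          ≤ S.sup' hS (fun a => |(u a - u₀) - z| / ‖a - x‖) := by
        intro z
        calc S.sup' hS (fun a => |u a - u₀| / ‖a - x‖)
            ≤ S.sup' hS (fun a => |u a - (u₀ + z)| / ‖a - x‖) := by exact hu₀ _
          _ = S.sup' hS (fun a => |(u a - u₀) - z| / ‖a - x‖) := by
              congr 1; funext a; rw [sub_add_eq_sub_sub]
      exact aux_le S hS (fun a => u a - u₀) (fun a => ‖a - x‖) hd hmin1
  have h2 : S.sup' hS (fun a => (u₀ - u a) / ‖a - x‖) = F := by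
    have hFeq : F = S.sup' hS (fun a => |u₀ - u a| / ‖a - x‖) := by
      rw [hF]
      congr 1
      funext a
      rw [abs_sub_comm]
    apply le_antisymm
    · rw [hFeq]
      apply Finset.sup'_le
      intro a ha
      exact le_trans (div_le_div_of_nonneg_right (le_abs_self _) (hd a ha).le)
        (Finset.le_sup' (fun a => |u₀ - u a| / ‖a - x‖) ha)
    · rw [hFeq]
      have hmin2 : ∀ z : ℝ, S.sup' hS (fun a => |u₀ - u a| / ‖a - x‖)
          ≤ S.sup' hS (fun a => |(u₀ - u a) - z| / ‖a - x‖) := by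
        intro z
        calc S.sup' hS (fun a => |u₀ - u a| / ‖a - x‖)
            = S.sup' hS (fun a => |u a - u₀| / ‖a - x‖) := by
              congr 1; funext a; rw [abs_sub_comm]
          _ ≤ S.sup' hS (fun a => |u a - (u₀ - z)| / ‖a - x‖) := by exact hu₀ _
          _ = S.sup' hS (fun a => |(u₀ - u a) - z| / ‖a - x‖) := by
              congr 1; funext a
              rw [show u₀ - u a - z = -(u a - (u₀ - z)) by ring, abs_neg]
      exact aux_le S hS (fun a => u₀ - u a) (fun a => ‖a - x‖) hd hmin2
  exact ⟨by rw [h1, hinf], by rw [h2, hinf]⟩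
end

section
/- Let G = (V,E,Ω) be a finite connected graph with V ⊂ ℝⁿ (adjacent vertices distinct as points), Ω ⊆ V nonempty, f : Ω → ℝᵐ, and let u be an extension of f. Fix x ∈ V \ Ω with S(x) nonempty, and define v by v(y) = u(y) for y ≠ x and v(x) = K(u,S(x))(x). If K(u,S(x))(x) ≠ u(x), then v is tighter than u. -/
/-- Local Lipschitz constant of `v` at `x` with respect to the graph with vertex set `V`
and adjacency relation `Adj` (with `sSup ∅ = 0` by the convention of `Real.sSup`). -/
noncomputable def locLip {n m : ℕ} (V : Finset (EuclideanSpace ℝ (Fin n)))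
    (Adj : EuclideanSpace ℝ (Fin n) → EuclideanSpace ℝ (Fin n) → Prop)
    (v : EuclideanSpace ℝ (Fin n) → EuclideanSpace ℝ (Fin m))
    (x : EuclideanSpace ℝ (Fin n)) : ℝ :=
  sSup {r : ℝ | ∃ y ∈ V, Adj x y ∧ r = ‖v y - v x‖ / ‖y - x‖}

/-- `v` is tighter than `u` (max over the empty set is `0`). -/
noncomputable def Tighter {n m : ℕ} (V Ω : Finset (EuclideanSpace ℝ (Fin n)))
    (Adj : EuclideanSpace ℝ (Fin n) → EuclideanSpace ℝ (Fin n) → Prop)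
    (v u : EuclideanSpace ℝ (Fin n) → EuclideanSpace ℝ (Fin m)) : Prop :=
  sSup {r : ℝ | ∃ x ∈ V, x ∉ Ω ∧ locLip V Adj v x < locLip V Adj u x ∧ r = locLip V Adj u x} >
  sSup {r : ℝ | ∃ x ∈ V, x ∉ Ω ∧ locLip V Adj u x < locLip V Adj v x ∧ r = locLip V Adj v x}

private lemma fin_aux1 {α : Type*} (V : Finset α) (P : α → Prop) (g : α → ℝ) :
    {r : ℝ | ∃ a ∈ V, P a ∧ r = g a}.Finite :=
  (V.finite_toSet.image g).subset (by rintro r ⟨a, ha, _, rfl⟩; exact ⟨a, ha, rfl⟩)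

private lemma fin_aux2 {α : Type*} (V : Finset α) (P Q : α → Prop) (g : α → ℝ) :
    {r : ℝ | ∃ a ∈ V, P a ∧ Q a ∧ r = g a}.Finite :=
  (V.finite_toSet.image g).subset (by rintro r ⟨a, ha, _, _, rfl⟩; exact ⟨a, ha, rfl⟩)

set_option maxHeartbeats 1600000 in
/-- replacing the value of an extension `u` at a single vertex `x ∈ V \ Ω`
by the Kirszbraun value `K(u, S(x))(x)` (when this differs from `u x`) yields a function
`v` which is tighter than `u`. -/
theorem update_by_kirszbraun_value_is_tighter (n m : ℕ)
    (V : Finset (EuclideanSpace ℝ (Fin n)))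
    (Adj : EuclideanSpace ℝ (Fin n) → EuclideanSpace ℝ (Fin n) → Prop)
    (hsymm : ∀ x y, Adj x y → Adj y x)
    (hne : ∀ x y, Adj x y → x ≠ y)
    (hconn : ∀ x ∈ V, ∀ y ∈ V,
      Relation.ReflTransGen (fun a b => a ∈ V ∧ b ∈ V ∧ Adj a b) x y)
    (Ω : Finset (EuclideanSpace ℝ (Fin n))) (hΩ : Ω.Nonempty) (hΩV : Ω ⊆ V)
    (f u : EuclideanSpace ℝ (Fin n) → EuclideanSpace ℝ (Fin m))
    (hu : ∀ z ∈ Ω, u z = f z)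
    (x : EuclideanSpace ℝ (Fin n)) (hxV : x ∈ V) (hxΩ : x ∉ Ω)
    (hSx : ∃ y ∈ V, Adj x y)
    (K : EuclideanSpace ℝ (Fin m))
    -- K is the Kirszbraun value of u restricted to S(x) at x, i.e. the minimizer of
    -- y ↦ max_{a ∈ S(x)} ‖u a - y‖ / ‖a - x‖
    (hK : ∀ z : EuclideanSpace ℝ (Fin m),
      sSup {r : ℝ | ∃ a ∈ V, Adj x a ∧ r = ‖u a - K‖ / ‖a - x‖}
        ≤ sSup {r : ℝ | ∃ a ∈ V, Adj x a ∧ r = ‖u a - z‖ / ‖a - x‖})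
    (hKne : K ≠ u x)
    (v : EuclideanSpace ℝ (Fin n) → EuclideanSpace ℝ (Fin m))
    (hvx : v x = K) (hv : ∀ y, y ≠ x → v y = u y) :
    Tighter V Ω Adj v u := by
  obtain ⟨y₀, hy₀V, hy₀adj⟩ := hSx
  set SK : Set ℝ := {r : ℝ | ∃ a ∈ V, Adj x a ∧ r = ‖u a - K‖ / ‖a - x‖} with hSKdef
  set SU : Set ℝ := {r : ℝ | ∃ a ∈ V, Adj x a ∧ r = ‖u a - u x‖ / ‖a - x‖} with hSUdef
  have hSKfin : SK.Finite := fin_aux1 V _ _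
  have hSUfin : SU.Finite := fin_aux1 V _ _
  have hdist : ∀ a, Adj x a → 0 < ‖a - x‖ := fun a ha =>
    norm_pos_iff.mpr (sub_ne_zero.mpr (Ne.symm (hne x a ha)))
  have hLvx : locLip V Adj v x = sSup SK := by
    unfold locLip
    congr 1
    ext r
    constructor
    · rintro ⟨a, ha, hadj, rfl⟩
      exact ⟨a, ha, hadj, by rw [hv a (Ne.symm (hne x a hadj)), hvx]⟩
    · rintro ⟨a, ha, hadj, rfl⟩
      exact ⟨a, ha, hadj, by rw [hv a (Ne.symm (hne x a hadj)), hvx]⟩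
  have hLux : locLip V Adj u x = sSup SU := rfl
  have hSK0 : (0 : ℝ) ≤ sSup SK :=
    le_trans (div_nonneg (norm_nonneg _) (norm_nonneg _))
      (le_csSup hSKfin.bddAbove ⟨y₀, hy₀V, hy₀adj, rfl⟩)
  -- the key strict inequality
  have key : sSup SK < sSup SU := by
    rcases lt_or_ge (sSup SK) (sSup SU) with h | h
    · exact h
    exfalso
    have heq : sSup SK = sSup SU := le_antisymm (hK (u x)) h
    set M := sSup SU with hM
    have hratioK : ∀ a ∈ V, Adj x a → ‖u a - K‖ / ‖a - x‖ ≤ M := fun a ha hadj => by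
      rw [← heq]; exact le_csSup hSKfin.bddAbove ⟨a, ha, hadj, rfl⟩
    have hratioU : ∀ a ∈ V, Adj x a → ‖u a - u x‖ / ‖a - x‖ ≤ M := fun a ha hadj =>
      le_csSup hSUfin.bddAbove ⟨a, ha, hadj, rfl⟩
    have hMpos : 0 < M := by
      rcases lt_or_ge 0 M with h' | h'
      · exact h'
      have h1 : ‖u y₀ - K‖ / ‖y₀ - x‖ = 0 :=
        le_antisymm (le_trans (hratioK y₀ hy₀V hy₀adj) h')
          (div_nonneg (norm_nonneg _) (norm_nonneg _))
      have h2 : ‖u y₀ - u x‖ / ‖y₀ - x‖ = 0 :=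
        le_antisymm (le_trans (hratioU y₀ hy₀V hy₀adj) h')
          (div_nonneg (norm_nonneg _) (norm_nonneg _))
      have hd := hdist y₀ hy₀adj
      have e1 : u y₀ = K :=
        sub_eq_zero.mp (norm_eq_zero.mp
          ((div_eq_zero_iff.mp h1).resolve_right (ne_of_gt hd)))
      have e2 : u y₀ = u x :=
        sub_eq_zero.mp (norm_eq_zero.mp
          ((div_eq_zero_iff.mp h2).resolve_right (ne_of_gt hd)))
      exact (hKne (e1.symm.trans e2)).elim
    -- the maximal distance R
    set DR : Set ℝ := {r : ℝ | ∃ a ∈ V, Adj x a ∧ r = ‖a - x‖} with hDRdef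
    have hDRfin : DR.Finite := fin_aux1 V _ _
    set R := sSup DR with hR
    have hRpos : 0 < R :=
      lt_of_lt_of_le (hdist y₀ hy₀adj) (le_csSup hDRfin.bddAbove ⟨y₀, hy₀V, hy₀adj, rfl⟩)
    have hRle : ∀ a ∈ V, Adj x a → ‖a - x‖ ≤ R := fun a ha hadj =>
      le_csSup hDRfin.bddAbove ⟨a, ha, hadj, rfl⟩
    -- the midpoint
    set z : EuclideanSpace ℝ (Fin m) := (2 : ℝ)⁻¹ • (K + u x) with hz
    have hdpos : 0 < ‖u x - K‖ := norm_pos_iff.mpr (sub_ne_zero.mpr (Ne.symm hKne))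
    have ht0 : 0 < ‖u x - K‖ ^ 2 / (4 * R ^ 2) :=
      div_pos (pow_pos hdpos 2) (by positivity)
    set c := Real.sqrt (M ^ 2 - ‖u x - K‖ ^ 2 / (4 * R ^ 2)) with hc
    -- each ratio for z is at most c
    have hbound : ∀ a ∈ V, Adj x a → ‖u a - z‖ / ‖a - x‖ ≤ c := by
      intro a ha hadj
      have hda := hdist a hadj
      have hpq : (u a - K) + (u a - u x) = (2 : ℝ) • (u a - z) := by
        rw [hz]; module
      have hsub : (u a - K) - (u a - u x) = u x - K := by abel
      have hpar := parallelogram_law_with_norm ℝ (u a - K) (u a - u x)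
      rw [hsub, hpq, norm_smul] at hpar
      simp only [Real.norm_ofNat] at hpar
      have hK' : ‖u a - K‖ ≤ M * ‖a - x‖ := (div_le_iff₀ hda).mp (hratioK a ha hadj)
      have hU' : ‖u a - u x‖ ≤ M * ‖a - x‖ := (div_le_iff₀ hda).mp (hratioU a ha hadj)
      have hsq : 4 * ‖u a - z‖ ^ 2 + ‖u x - K‖ ^ 2 ≤ 4 * (M * ‖a - x‖) ^ 2 := by
        nlinarith [hpar, hK', hU', norm_nonneg (u a - K), norm_nonneg (u a - u x)]
      have hs2 : ‖a - x‖ ^ 2 ≤ R ^ 2 := by nlinarith [hRle a ha hadj, hda.le]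
      have ht : ‖u x - K‖ ^ 2 / (4 * R ^ 2) * (4 * R ^ 2) = ‖u x - K‖ ^ 2 :=
        div_mul_cancel₀ _ (by positivity)
      have hratio2 : (‖u a - z‖ / ‖a - x‖) ^ 2
          ≤ M ^ 2 - ‖u x - K‖ ^ 2 / (4 * R ^ 2) := by
        rw [div_pow, div_le_iff₀ (by positivity : (0:ℝ) < ‖a - x‖ ^ 2)]
        nlinarith [hsq, ht, mul_nonneg ht0.le (sub_nonneg.mpr hs2)]
      calc ‖u a - z‖ / ‖a - x‖
          = Real.sqrt ((‖u a - z‖ / ‖a - x‖) ^ 2) :=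
            (Real.sqrt_sq (by positivity)).symm
        _ ≤ c := Real.sqrt_le_sqrt hratio2
    have hcM : c < M := by
      rw [hc, Real.sqrt_lt' hMpos]
      linarith
    have hsup_le : sSup {r : ℝ | ∃ a ∈ V, Adj x a ∧ r = ‖u a - z‖ / ‖a - x‖} ≤ c := by
      apply Real.sSup_le _ (Real.sqrt_nonneg _)
      rintro r ⟨a, ha, hadj, rfl⟩
      exact hbound a ha hadj
    have hfin := hK z
    rw [heq] at hfin
    exact absurd (lt_of_le_of_lt (hfin.trans hsup_le) hcM) (lt_irrefl M)
  -- Now prove Tighter.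
  unfold Tighter
  have hRHS : sSup {r : ℝ | ∃ p ∈ V, p ∉ Ω ∧ locLip V Adj u p < locLip V Adj v p
      ∧ r = locLip V Adj v p} ≤ sSup SK := by
    apply Real.sSup_le _ hSK0
    rintro r ⟨p, hpV, hpΩ, hlt, rfl⟩
    by_cases hpx : p = x
    · subst hpx
      rw [hLvx, hLux] at hlt
      exact absurd hlt (not_lt_of_gt key)
    have hmax : locLip V Adj v p ≤ max (locLip V Adj u p) (sSup SK) := by
      unfold locLip
      apply Real.sSup_le _ (le_trans hSK0 (le_max_right _ _))
      rintro r ⟨a, ha, hadj, rfl⟩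
      by_cases hax : a = x
      · rw [hax]
        have hterm : ‖v x - v p‖ / ‖x - p‖ = ‖u p - K‖ / ‖p - x‖ := by
          rw [hvx, hv p hpx, norm_sub_rev, norm_sub_rev x p]
        rw [hterm]
        exact le_trans (le_csSup hSKfin.bddAbove ⟨p, hpV, hsymm p x (hax ▸ hadj), rfl⟩)
          (le_max_right _ _)
      · have hterm : ‖v a - v p‖ / ‖a - p‖ = ‖u a - u p‖ / ‖a - p‖ := by
          rw [hv a hax, hv p hpx]
        rw [hterm]
        refine le_trans (le_csSup (fin_aux1 V (Adj p)
          (fun a => ‖u a - u p‖ / ‖a - p‖)).bddAbove ⟨a, ha, hadj, rfl⟩) (le_max_left _ _)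
    rcases max_cases (locLip V Adj u p) (sSup SK) with ⟨hm, _⟩ | ⟨hm, _⟩
    · rw [hm] at hmax
      exact absurd hlt (not_lt_of_ge hmax)
    · rw [hm] at hmax
      exact hmax
  have hLHS : sSup SU ≤ sSup {r : ℝ | ∃ p ∈ V, p ∉ Ω ∧ locLip V Adj v p < locLip V Adj u p
      ∧ r = locLip V Adj u p} := by
    apply le_csSup (fin_aux2 V _ _ _).bddAbove
    exact ⟨x, hxV, hxΩ, by rw [hLvx, hLux]; exact key, hLux⟩
  exact lt_of_le_of_lt hRHS (lt_of_lt_of_le key hLHS)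
end

section
/- Let G = (V,E,Ω) be a finite connected graph with V ⊂ ℝⁿ (adjacent vertices distinct as points), Ω ⊆ V nonempty, f : Ω → ℝᵐ, u an extension of f, and x ∈ V \ Ω with S(x) nonempty. Define v by v(y) = u(y) for y ≠ x and v(x) = K(u,S(x))(x), and suppose K(u,S(x))(x) ≠ u(x). Then for every y ∈ V \ Ω one has Lv(y) ≤ max{Lv(x), Lu(y)}. -/
lemma locLip_set_finite {n : ℕ} (V : Finset (EuclideanSpace ℝ (Fin n)))
    (Adj : EuclideanSpace ℝ (Fin n) → EuclideanSpace ℝ (Fin n) → Prop)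
    (g : EuclideanSpace ℝ (Fin n) → ℝ) (x : EuclideanSpace ℝ (Fin n)) :
    Set.Finite {r : ℝ | ∃ a ∈ V, Adj x a ∧ r = g a} := by
  apply Set.Finite.subset ((V.finite_toSet).image g)
  rintro r ⟨a, ha, _, rfl⟩
  exact ⟨a, ha, rfl⟩

/-- if `v` is obtained from an extension `u` by replacing its value at a
single vertex `x ∈ V \ Ω` with the Kirszbraun value `K(u, S(x))(x) ≠ u x`, then for every
`y ∈ V \ Ω` one has `Lv(y) ≤ max {Lv(x), Lu(y)}`. -/
theorem locLip_update_le_max (n m : ℕ)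
    (V : Finset (EuclideanSpace ℝ (Fin n)))
    (Adj : EuclideanSpace ℝ (Fin n) → EuclideanSpace ℝ (Fin n) → Prop)
    (hsymm : ∀ x y, Adj x y → Adj y x)
    (hne : ∀ x y, Adj x y → x ≠ y)
    (hconn : ∀ x ∈ V, ∀ y ∈ V,
      Relation.ReflTransGen (fun a b => a ∈ V ∧ b ∈ V ∧ Adj a b) x y)
    (Ω : Finset (EuclideanSpace ℝ (Fin n))) (hΩ : Ω.Nonempty) (hΩV : Ω ⊆ V)
    (f u : EuclideanSpace ℝ (Fin n) → EuclideanSpace ℝ (Fin m))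
    (hu : ∀ z ∈ Ω, u z = f z)
    (x : EuclideanSpace ℝ (Fin n)) (hxV : x ∈ V) (hxΩ : x ∉ Ω)
    (hSx : ∃ y ∈ V, Adj x y)
    (K : EuclideanSpace ℝ (Fin m))
    -- K is the Kirszbraun value of u restricted to S(x) at x, i.e. the minimizer of
    -- y ↦ max_{a ∈ S(x)} ‖u a - y‖ / ‖a - x‖
    (hK : ∀ z : EuclideanSpace ℝ (Fin m),
      sSup {r : ℝ | ∃ a ∈ V, Adj x a ∧ r = ‖u a - K‖ / ‖a - x‖}
        ≤ sSup {r : ℝ | ∃ a ∈ V, Adj x a ∧ r = ‖u a - z‖ / ‖a - x‖})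
    (hKne : K ≠ u x)
    (v : EuclideanSpace ℝ (Fin n) → EuclideanSpace ℝ (Fin m))
    (hvx : v x = K) (hv : ∀ y, y ≠ x → v y = u y) :
    ∀ y ∈ V, y ∉ Ω → locLip V Adj v y ≤ max (locLip V Adj v x) (locLip V Adj u y) := by
  intro y hyV hyΩ
  by_cases hyx : y = x
  · subst hyx; exact le_max_left _ _
  · apply Real.sSup_le
    · rintro r ⟨z, hzV, hAdj, rfl⟩
      by_cases hzx : z = x
      · subst hzx
        have h1 : ‖v z - v y‖ / ‖z - y‖ = ‖v y - v z‖ / ‖y - z‖ := by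
          rw [norm_sub_rev (v z), norm_sub_rev z]
        rw [h1]
        refine le_trans (le_csSup ((locLip_set_finite V Adj
          (fun a => ‖v a - v z‖ / ‖a - z‖) z).bddAbove) ?_) (le_max_left _ _)
        exact ⟨y, hyV, hsymm y z hAdj, rfl⟩
      · have h1 : ‖v z - v y‖ / ‖z - y‖ = ‖u z - u y‖ / ‖z - y‖ := by
          rw [hv z hzx, hv y hyx]
        rw [h1]
        refine le_trans (le_csSup ((locLip_set_finite V Adj
          (fun a => ‖u a - u y‖ / ‖a - y‖) y).bddAbove) ?_) (le_max_right _ _)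
        exact ⟨z, hzV, hAdj, rfl⟩
    · refine le_max_of_le_right (Real.sSup_nonneg ?_)
      rintro r ⟨z, hzV, hAdj, rfl⟩
      exact div_nonneg (norm_nonneg _) (norm_nonneg _)
end

section
/- Let G = (V,E,Ω) be a finite connected graph with V ⊂ ℝⁿ (adjacent vertices distinct as points, each vertex of V \ Ω having nonempty neighborhood), Ω ⊆ V nonempty, and f : Ω → ℝᵐ. If u is a tight extension of f on G, then u is a Kirszbraun extension of f on G, i.e., u(x) = K(u,S(x))(x) for all x ∈ V \ Ω. -/
/-- A set of reals all of whose elements are values of `F` on a finset is bounded above. -/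
lemma bddAbove_aux {α : Type*} (V : Finset α) (F : α → ℝ) (S : Set ℝ)
    (h : ∀ r ∈ S, ∃ y ∈ V, r = F y) : BddAbove S := by
  apply BddAbove.mono (fun r hr => ?_) (V.finite_toSet.image F).bddAbove
  obtain ⟨y, hy, rfl⟩ := h r hr
  exact ⟨y, hy, rfl⟩

/-- every tight extension `u` of `f` on the graph `G = (V, E, Ω)` is a
Kirszbraun extension: for each `x ∈ V \ Ω`, `u x` is the Kirszbraun value, i.e. `u x`
minimizes `y ↦ max_{a ∈ S(x)} ‖u a - y‖ / ‖a - x‖`. -/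
theorem tight_is_kirszbraun (n m : ℕ)
    (V : Finset (EuclideanSpace ℝ (Fin n)))
    (Adj : EuclideanSpace ℝ (Fin n) → EuclideanSpace ℝ (Fin n) → Prop)
    (hsymm : ∀ x y, Adj x y → Adj y x)
    (hne : ∀ x y, Adj x y → x ≠ y)
    (hconn : ∀ x ∈ V, ∀ y ∈ V,
      Relation.ReflTransGen (fun a b => a ∈ V ∧ b ∈ V ∧ Adj a b) x y)
    (Ω : Finset (EuclideanSpace ℝ (Fin n))) (hΩ : Ω.Nonempty) (hΩV : Ω ⊆ V)
    (hnbr : ∀ x ∈ V, x ∉ Ω → ∃ y ∈ V, Adj x y)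
    (f u : EuclideanSpace ℝ (Fin n) → EuclideanSpace ℝ (Fin m))
    -- u is an extension of f
    (hu : ∀ z ∈ Ω, u z = f z)
    -- u is tight: no extension of f is tighter than u
    (htight : ¬ ∃ v : EuclideanSpace ℝ (Fin n) → EuclideanSpace ℝ (Fin m),
        (∀ z ∈ Ω, v z = f z) ∧ Tighter V Ω Adj v u) :
    ∀ x ∈ V, x ∉ Ω → ∀ z : EuclideanSpace ℝ (Fin m),
      sSup {r : ℝ | ∃ a ∈ V, Adj x a ∧ r = ‖u a - u x‖ / ‖a - x‖}
        ≤ sSup {r : ℝ | ∃ a ∈ V, Adj x a ∧ r = ‖u a - z‖ / ‖a - x‖} := by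
  classical
  intro x hxV hxΩ z
  by_contra hcon
  push_neg at hcon
  set M : ℝ := sSup {r : ℝ | ∃ a ∈ V, Adj x a ∧ r = ‖u a - u x‖ / ‖a - x‖} with hM
  set M' : ℝ := sSup {r : ℝ | ∃ a ∈ V, Adj x a ∧ r = ‖u a - z‖ / ‖a - x‖} with hM'
  have hM'0 : 0 ≤ M' := by
    apply Real.sSup_nonneg
    rintro r ⟨a, _, _, rfl⟩
    positivity
  -- the modified function
  set v : EuclideanSpace ℝ (Fin n) → EuclideanSpace ℝ (Fin m) :=
    fun w => if w = x then z else u w with hv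
  have hvx' : v x = z := by simp [hv]
  have hvny : ∀ w, w ≠ x → v w = u w := by intro w hw; simp [hv, hw]
  have hvext : ∀ w ∈ Ω, v w = f w := by
    intro w hw
    rw [hvny w (by rintro rfl; exact hxΩ hw), hu w hw]
  -- locLip of v at x equals M'
  have hvxM : locLip V Adj v x = M' := by
    rw [locLip, hM']
    congr 1
    ext r
    constructor
    · rintro ⟨a, haV, hadj, rfl⟩
      exact ⟨a, haV, hadj, by rw [hvny a (hne x a hadj).symm, hvx']⟩
    · rintro ⟨a, haV, hadj, rfl⟩
      exact ⟨a, haV, hadj, by rw [hvny a (hne x a hadj).symm, hvx']⟩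
  have huxM : locLip V Adj u x = M := rfl
  -- at vertices w ≠ x, locLip v w ≤ max (locLip u w) M'
  have hkey : ∀ w ∈ V, w ≠ x → locLip V Adj v w ≤ max (locLip V Adj u w) M' := by
    intro w hwV hwx
    apply Real.sSup_le
    · rintro r ⟨a, haV, hadj, rfl⟩
      have hvw : v w = u w := hvny w hwx
      by_cases hax : a = x
      · subst hax
        have heq : ‖v a - v w‖ / ‖a - w‖ = ‖u w - z‖ / ‖w - a‖ := by
          rw [hvw, hvx', norm_sub_rev, norm_sub_rev a w]
        rw [heq]
        refine le_trans (le_csSup ?_ ?_) (le_max_right _ _)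
        · exact bddAbove_aux V (fun b => ‖u b - z‖ / ‖b - a‖) _
            (by rintro r ⟨b, hbV, _, rfl⟩; exact ⟨b, hbV, rfl⟩)
        · exact ⟨w, hwV, hsymm w a hadj, rfl⟩
      · rw [hvny a hax, hvw]
        refine le_trans (le_csSup ?_ ?_) (le_max_left _ _)
        · exact bddAbove_aux V (fun b => ‖u b - u w‖ / ‖b - w‖) _
            (by rintro r ⟨b, hbV, _, rfl⟩; exact ⟨b, hbV, rfl⟩)
        · exact ⟨a, haV, hadj, rfl⟩
    · exact le_trans hM'0 (le_max_right _ _)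
  -- v is tighter than u, contradiction
  apply htight
  refine ⟨v, hvext, ?_⟩
  rw [Tighter]
  have hA : M ≤ sSup {r : ℝ | ∃ w ∈ V, w ∉ Ω ∧
      locLip V Adj v w < locLip V Adj u w ∧ r = locLip V Adj u w} := by
    refine le_csSup ?_ ⟨x, hxV, hxΩ, by rw [hvxM, huxM]; exact hcon, huxM.symm⟩
    exact bddAbove_aux V (locLip V Adj u) _
      (by rintro r ⟨w, hwV, _, _, rfl⟩; exact ⟨w, hwV, rfl⟩)
  have hB : sSup {r : ℝ | ∃ w ∈ V, w ∉ Ω ∧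
      locLip V Adj u w < locLip V Adj v w ∧ r = locLip V Adj v w} ≤ M' := by
    apply Real.sSup_le _ hM'0
    rintro r ⟨w, hwV, hwΩ, hlt, rfl⟩
    by_cases hwx : w = x
    · subst hwx; rw [hvxM]
    · have h1 := hkey w hwV hwx
      rcases max_cases (locLip V Adj u w) M' with ⟨heq, _⟩ | ⟨heq, _⟩
      · rw [heq] at h1; exact absurd (lt_of_lt_of_le hlt h1) (lt_irrefl _)
      · rw [heq] at h1; exact h1
  exact lt_of_le_of_lt hB (lt_of_lt_of_le hcon hA)
end

section
/- Let G = (V,E,Ω) be a finite connected graph with V ⊂ ℝⁿ (adjacent vertices distinct as points, each vertex of V \ Ω having nonempty neighborhood), Ω ⊆ V nonempty, and f : Ω → ℝᵐ. Then there exists a Kirszbraun extension u of f on G, i.e., a function u : V → ℝᵐ with u = f on Ω and u(x) = K(u,S(x))(x) for every x ∈ V \ Ω. -/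
open Metric Filter Finset Real
open scoped Classical

noncomputable section KirszbraunAux

variable {n m : ℕ}

private def Uext (W : Finset (EuclideanSpace ℝ (Fin n)))
    (f : EuclideanSpace ℝ (Fin n) → EuclideanSpace ℝ (Fin m))
    (w : {x // x ∈ W} → EuclideanSpace ℝ (Fin m)) :
    EuclideanSpace ℝ (Fin n) → EuclideanSpace ℝ (Fin m) :=
  fun y => if h : y ∈ W then w ⟨y, h⟩ else f y

private lemma continuous_Uext (W : Finset (EuclideanSpace ℝ (Fin n)))
    (f : EuclideanSpace ℝ (Fin n) → EuclideanSpace ℝ (Fin m))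
    (y : EuclideanSpace ℝ (Fin n)) :
    Continuous (fun w : {x // x ∈ W} → EuclideanSpace ℝ (Fin m) => Uext W f w y) := by
  unfold Uext
  by_cases h : y ∈ W
  · simp only [dif_pos h]; exact continuous_apply _
  · simp only [dif_neg h]; exact continuous_const

private lemma Uext_mem (W : Finset (EuclideanSpace ℝ (Fin n)))
    (f : EuclideanSpace ℝ (Fin n) → EuclideanSpace ℝ (Fin m))
    {w : {x // x ∈ W} → EuclideanSpace ℝ (Fin m)} {y : EuclideanSpace ℝ (Fin n)}
    (h : y ∈ W) : Uext W f w y = w ⟨y, h⟩ := dif_pos h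

private lemma Uext_not_mem (W : Finset (EuclideanSpace ℝ (Fin n)))
    (f : EuclideanSpace ℝ (Fin n) → EuclideanSpace ℝ (Fin m))
    {w : {x // x ∈ W} → EuclideanSpace ℝ (Fin m)} {y : EuclideanSpace ℝ (Fin n)}
    (h : y ∉ W) : Uext W f w y = f y := dif_neg h

private lemma Uext_update_same (W : Finset (EuclideanSpace ℝ (Fin n)))
    (f : EuclideanSpace ℝ (Fin n) → EuclideanSpace ℝ (Fin m))
    {x : EuclideanSpace ℝ (Fin n)} (hx : x ∈ W)
    (w : {x // x ∈ W} → EuclideanSpace ℝ (Fin m)) (c : EuclideanSpace ℝ (Fin m)) :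
    Uext W f (Function.update w ⟨x, hx⟩ c) x = c := by
  rw [Uext_mem W f hx, Function.update_self]

private lemma Uext_update_ne (W : Finset (EuclideanSpace ℝ (Fin n)))
    (f : EuclideanSpace ℝ (Fin n) → EuclideanSpace ℝ (Fin m))
    {x : EuclideanSpace ℝ (Fin n)} (hx : x ∈ W)
    (w : {x // x ∈ W} → EuclideanSpace ℝ (Fin m)) (c : EuclideanSpace ℝ (Fin m))
    {y : EuclideanSpace ℝ (Fin n)} (hy : y ≠ x) :
    Uext W f (Function.update w ⟨x, hx⟩ c) y = Uext W f w y := by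
  unfold Uext
  by_cases h : y ∈ W
  · simp only [dif_pos h]
    rw [Function.update_of_ne]
    exact fun hh => hy (congrArg Subtype.val hh)
  · simp only [dif_neg h]

private lemma exists_proj_ball {m : ℕ} {R : ℝ} (hR : 0 ≤ R) (z : EuclideanSpace ℝ (Fin m)) :
    ∃ z' : EuclideanSpace ℝ (Fin m), ‖z'‖ ≤ R ∧
      ∀ p : EuclideanSpace ℝ (Fin m), ‖p‖ ≤ R → ‖p - z'‖ ≤ ‖p - z‖ := by
  by_cases hz : ‖z‖ ≤ R
  · exact ⟨z, hz, fun p _ => le_rfl⟩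
  push_neg at hz
  have hz0 : 0 < ‖z‖ := lt_of_le_of_lt hR hz
  set c : ℝ := R / ‖z‖ with hc
  have hc0 : 0 ≤ c := div_nonneg hR hz0.le
  have hc1 : c < 1 := (div_lt_one hz0).mpr hz
  have hcz : c * ‖z‖ = R := div_mul_cancel₀ R hz0.ne'
  refine ⟨c • z, ?_, ?_⟩
  · rw [norm_smul, Real.norm_eq_abs, abs_of_nonneg hc0, hcz]
  · intro p hp
    have hip : inner ℝ p z ≤ c * ‖z‖ * ‖z‖ := by
      calc (inner ℝ p z : ℝ) ≤ ‖p‖ * ‖z‖ := real_inner_le_norm p z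
      _ ≤ R * ‖z‖ := mul_le_mul_of_nonneg_right hp (norm_nonneg z)
      _ = c * ‖z‖ * ‖z‖ := by rw [hcz]
    have hsq : ‖p - c • z‖ ^ 2 ≤ ‖p - z‖ ^ 2 := by
      rw [norm_sub_sq_real, norm_sub_sq_real, real_inner_smul_right, norm_smul,
        Real.norm_eq_abs, abs_of_nonneg hc0]
      nlinarith [mul_nonneg (sub_nonneg.mpr hc1.le)
        (sub_nonneg.mpr hip), sq_nonneg ((1 - c) * ‖z‖)]
    have := Real.sqrt_le_sqrt hsq
    rwa [Real.sqrt_sq (norm_nonneg _), Real.sqrt_sq (norm_nonneg _)] at this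

end KirszbraunAux

set_option maxHeartbeats 4000000 in
/-- on a finite connected graph `G = (V, E, Ω)` with `V ⊆ ℝⁿ`, adjacent
vertices distinct, each vertex of `V \ Ω` having a nonempty neighborhood, and `Ω ⊆ V`
nonempty, every `f : Ω → ℝᵐ` admits a Kirszbraun extension `u`: a function with `u = f`
on `Ω` such that for every `x ∈ V \ Ω`, `u x` minimizes
`y ↦ max_{a ∈ S(x)} ‖u a - y‖ / ‖a - x‖` (i.e. `u x = K(u, S(x))(x)`). -/
theorem exists_kirszbraun_extension (n m : ℕ)
    (V : Finset (EuclideanSpace ℝ (Fin n)))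
    (Adj : EuclideanSpace ℝ (Fin n) → EuclideanSpace ℝ (Fin n) → Prop)
    (hsymm : ∀ x y, Adj x y → Adj y x)
    (hne : ∀ x y, Adj x y → x ≠ y)
    (hconn : ∀ x ∈ V, ∀ y ∈ V,
      Relation.ReflTransGen (fun a b => a ∈ V ∧ b ∈ V ∧ Adj a b) x y)
    (Ω : Finset (EuclideanSpace ℝ (Fin n))) (hΩ : Ω.Nonempty) (hΩV : Ω ⊆ V)
    (hnbr : ∀ x ∈ V, x ∉ Ω → ∃ y ∈ V, Adj x y)
    (f : EuclideanSpace ℝ (Fin n) → EuclideanSpace ℝ (Fin m)) :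
    ∃ u : EuclideanSpace ℝ (Fin n) → EuclideanSpace ℝ (Fin m),
      (∀ z ∈ Ω, u z = f z) ∧
      (∀ x ∈ V, x ∉ Ω → ∀ z : EuclideanSpace ℝ (Fin m),
        sSup {r : ℝ | ∃ a ∈ V, Adj x a ∧ r = ‖u a - u x‖ / ‖a - x‖}
          ≤ sSup {r : ℝ | ∃ a ∈ V, Adj x a ∧ r = ‖u a - z‖ / ‖a - x‖}) := by
  classical
  set W : Finset (EuclideanSpace ℝ (Fin n)) := V \ Ω with hWdef
  have hVne : V.Nonempty := hΩ.mono hΩV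
  set R : ℝ := V.sup' hVne fun a => ‖f a‖ with hRdef
  have hRf : ∀ a ∈ V, ‖f a‖ ≤ R := fun a ha => le_sup' (fun a => ‖f a‖) ha
  have hR0 : 0 ≤ R := le_trans (norm_nonneg _) (hRf _ (hΩV hΩ.choose_spec))
  set K : Set ({x // x ∈ W} → EuclideanSpace ℝ (Fin m)) :=
    Set.univ.pi fun _ => closedBall (0 : EuclideanSpace ℝ (Fin m)) R with hKdef
  have hKc : IsCompact K := isCompact_univ_pi fun _ => isCompact_closedBall _ _
  have hKne : K.Nonempty := ⟨fun _ => 0, fun i _ => mem_closedBall_self hR0⟩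
  have hUb : ∀ w ∈ K, ∀ a ∈ V, ‖Uext W f w a‖ ≤ R := by
    intro w hw a ha
    by_cases h : a ∈ W
    · rw [Uext_mem W f h]
      exact mem_closedBall_zero_iff.mp (hw ⟨a, h⟩ (Set.mem_univ _))
    · rw [Uext_not_mem W f h]
      exact hRf a ha
  set Eset : Finset (EuclideanSpace ℝ (Fin n) × EuclideanSpace ℝ (Fin n)) :=
    (V ×ˢ V).filter (fun p => Adj p.1 p.2) with hEdef
  set Φ : ℝ → ({x // x ∈ W} → EuclideanSpace ℝ (Fin m)) → ℝ :=
    fun t w => ∑ e ∈ Eset, Real.exp (t * (‖Uext W f w e.2 - Uext W f w e.1‖ / ‖e.2 - e.1‖))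
    with hΦdef
  have hΦc : ∀ t : ℝ, Continuous (Φ t) := by
    intro t
    apply continuous_finset_sum
    intro e _
    exact Real.continuous_exp.comp (continuous_const.mul
      ((((continuous_Uext W f e.2).sub (continuous_Uext W f e.1)).norm).div_const _))
  have hmin : ∀ k : ℕ, ∃ w ∈ K, IsMinOn (Φ k) K w :=
    fun k => hKc.exists_isMinOn hKne (hΦc k).continuousOn
  set seq : ℕ → ({x // x ∈ W} → EuclideanSpace ℝ (Fin m)) := fun k => (hmin k).choose
    with hseqdef
  have hseqK : ∀ k : ℕ, seq k ∈ K := fun k => (hmin k).choose_spec.1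
  have hseqmin : ∀ k : ℕ, IsMinOn (Φ (k : ℝ)) K (seq k) := fun k => (hmin k).choose_spec.2
  obtain ⟨ul, hulK, φ, hφ, hφt⟩ := hKc.tendsto_subseq hseqK
  refine ⟨Uext W f ul, ?_, ?_⟩
  · intro z hz
    exact Uext_not_mem W f (fun h => (Finset.mem_sdiff.mp h).2 hz)
  intro x hxV hxΩ z
  have hxW : x ∈ W := Finset.mem_sdiff.mpr ⟨hxV, hxΩ⟩
  set Sx : Finset (EuclideanSpace ℝ (Fin n)) := V.filter (fun a => Adj x a) with hSxdef
  have hSxne : Sx.Nonempty := by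
    obtain ⟨a, haV, hadj⟩ := hnbr x hxV hxΩ
    exact ⟨a, Finset.mem_filter.mpr ⟨haV, hadj⟩⟩
  set g : EuclideanSpace ℝ (Fin m) → ℝ :=
    fun y => Sx.sup' hSxne fun a => ‖Uext W f ul a - y‖ / ‖a - x‖ with hgdef
  set M : ℝ := g (Uext W f ul x) with hMdef
  -- the key minimality property
  have hM : ∀ y : EuclideanSpace ℝ (Fin m), M ≤ g y := by
    intro y
    by_contra hlt
    push_neg at hlt
    obtain ⟨z', hz'R, hz'proj⟩ := exists_proj_ball hR0 y
    have hgz' : g z' ≤ g y := by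
      apply Finset.sup'_le
      intro a ha
      have haV : a ∈ V := (Finset.mem_filter.mp ha).1
      calc ‖Uext W f ul a - z'‖ / ‖a - x‖
          ≤ ‖Uext W f ul a - y‖ / ‖a - x‖ := by
            gcongr
            exact hz'proj _ (hUb ul hulK a haV)
        _ ≤ g y := Finset.le_sup' (fun a => ‖Uext W f ul a - y‖ / ‖a - x‖) ha
    set δ : ℝ := (M - g z') / 3 with hδdef
    have hδ : 0 < δ := by
      have : g z' < M := lt_of_le_of_lt hgz' hlt
      simp only [hδdef]; linarith
    obtain ⟨astar, hastar, hMstar⟩ := Finset.exists_mem_eq_sup' hSxne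
      (fun a => ‖Uext W f ul a - Uext W f ul x‖ / ‖a - x‖)
    have hE1 : ∀ᶠ nn in atTop, ∀ a ∈ Sx,
        ‖Uext W f (seq (φ nn)) a - z'‖ / ‖a - x‖ < M - 2 * δ := by
      rw [eventually_all_finset]
      intro a ha
      have hcont : Continuous fun w : {x // x ∈ W} → EuclideanSpace ℝ (Fin m) =>
          ‖Uext W f w a - z'‖ / ‖a - x‖ :=
        (((continuous_Uext W f a).sub continuous_const).norm).div_const _
      have hlim := (hcont.tendsto ul).comp hφt
      apply hlim.eventually_lt_const
      have hle : ‖Uext W f ul a - z'‖ / ‖a - x‖ ≤ g z' := Finset.le_sup' (fun a => ‖Uext W f ul a - z'‖ / ‖a - x‖) ha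
      have : g z' = M - 3 * δ := by simp only [hδdef]; ring
      show ‖Uext W f ul a - z'‖ / ‖a - x‖ < M - 2 * δ
      linarith
    have hE2 : ∀ᶠ nn in atTop, M - δ <
        ‖Uext W f (seq (φ nn)) astar - Uext W f (seq (φ nn)) x‖ / ‖astar - x‖ := by
      have hcont : Continuous fun w : {x // x ∈ W} → EuclideanSpace ℝ (Fin m) =>
          ‖Uext W f w astar - Uext W f w x‖ / ‖astar - x‖ :=
        (((continuous_Uext W f astar).sub (continuous_Uext W f x)).norm).div_const _
      have hlim := (hcont.tendsto ul).comp hφt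
      apply hlim.eventually_const_lt
      have : ‖Uext W f ul astar - Uext W f ul x‖ / ‖astar - x‖ = M := hMstar.symm
      linarith
    set I : Finset (EuclideanSpace ℝ (Fin n) × EuclideanSpace ℝ (Fin n)) :=
      Eset.filter (fun e => e.1 = x ∨ e.2 = x) with hIdef
    have hE3 : ∀ᶠ nn in atTop, (I.card : ℝ) < Real.exp ((φ nn : ℝ) * δ) := by
      have h1 : Tendsto (fun nn => ((φ nn : ℕ) : ℝ) * δ) atTop atTop :=
        (tendsto_natCast_atTop_atTop.comp hφ.tendsto_atTop).atTop_mul_const hδ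
      exact (Real.tendsto_exp_atTop.comp h1).eventually_gt_atTop _
    have hE4 : ∀ᶠ nn in atTop, 1 ≤ φ nn := hφ.tendsto_atTop.eventually_ge_atTop 1
    obtain ⟨nn, h1, h2, h3, h4⟩ := ((hE1.and (hE2.and (hE3.and hE4)))).exists
    set k : ℕ := φ nn with hkdef
    set w : {x // x ∈ W} → EuclideanSpace ℝ (Fin m) := seq k with hwdef
    set t : ℝ := (k : ℝ) with htdef
    have ht0 : 0 < t := by
      simp only [htdef]
      exact_mod_cast lt_of_lt_of_le zero_lt_one h4
    set v : {x // x ∈ W} → EuclideanSpace ℝ (Fin m) :=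
      Function.update w ⟨x, hxW⟩ z' with hvdef
    have hvK : v ∈ K := by
      intro i _
      simp only [hvdef, Function.update_apply]
      split
      · exact mem_closedBall_zero_iff.mpr hz'R
      · exact hseqK k i (Set.mem_univ _)
    -- ratios on edges not incident to x are unchanged
    have hsame : ∀ e ∈ Eset.filter (fun e => ¬(e.1 = x ∨ e.2 = x)),
        Real.exp (t * (‖Uext W f v e.2 - Uext W f v e.1‖ / ‖e.2 - e.1‖)) =
        Real.exp (t * (‖Uext W f w e.2 - Uext W f w e.1‖ / ‖e.2 - e.1‖)) := by
      intro e he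
      have hnot := (Finset.mem_filter.mp he).2
      push_neg at hnot
      rw [hvdef, Uext_update_ne W f hxW w z' hnot.2, Uext_update_ne W f hxW w z' hnot.1]
    -- each incident ratio of v is small
    have hAterm : ∀ e ∈ I,
        ‖Uext W f v e.2 - Uext W f v e.1‖ / ‖e.2 - e.1‖ ≤ M - 2 * δ := by
      intro e he
      have heE := (Finset.mem_filter.mp he).1
      have hadj : Adj e.1 e.2 := (Finset.mem_filter.mp heE).2
      have hmemV := Finset.mem_product.mp (Finset.mem_filter.mp heE).1
      rcases (Finset.mem_filter.mp he).2 with h | h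
      · -- e.1 = x
        have hadjx : Adj x e.2 := h ▸ hadj
        have he2x : e.2 ≠ x := (hne x e.2 hadjx).symm
        have hmem : e.2 ∈ Sx := Finset.mem_filter.mpr ⟨hmemV.2, hadjx⟩
        have := h1 e.2 hmem
        rw [hvdef, Uext_update_ne W f hxW w z' he2x, h, Uext_update_same W f hxW w z']
        exact this.le
      · -- e.2 = x
        have he1x : e.1 ≠ x := by
          intro hh
          rw [hh, h] at hadj
          exact hne x x hadj rfl
        have hadjx : Adj x e.1 := by
          have hadj' := hadj
          rw [h] at hadj'
          exact hsymm _ _ hadj'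
        have hmem : e.1 ∈ Sx := Finset.mem_filter.mpr ⟨hmemV.1, hadjx⟩
        have := h1 e.1 hmem
        rw [hvdef, Uext_update_ne W f hxW w z' he1x, h, Uext_update_same W f hxW w z',
          norm_sub_rev, norm_sub_rev x e.1]
        exact this.le
    have hestar : ((x, astar) : _ × _) ∈ I := by
      have haV : astar ∈ V := (Finset.mem_filter.mp hastar).1
      have hadj : Adj x astar := (Finset.mem_filter.mp hastar).2
      refine Finset.mem_filter.mpr ⟨Finset.mem_filter.mpr ⟨Finset.mem_product.mpr ⟨hxV, haV⟩, hadj⟩, Or.inl rfl⟩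
    have hIne : I.Nonempty := ⟨_, hestar⟩
    -- sum over incident edges for v
    have hA : ∑ e ∈ I, Real.exp (t * (‖Uext W f v e.2 - Uext W f v e.1‖ / ‖e.2 - e.1‖))
        ≤ (I.card : ℝ) * Real.exp (t * (M - 2 * δ)) := by
      calc ∑ e ∈ I, Real.exp (t * (‖Uext W f v e.2 - Uext W f v e.1‖ / ‖e.2 - e.1‖))
          ≤ ∑ _e ∈ I, Real.exp (t * (M - 2 * δ)) := by
            apply Finset.sum_le_sum
            intro e he
            exact Real.exp_le_exp.mpr (mul_le_mul_of_nonneg_left (hAterm e he) ht0.le)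
        _ = (I.card : ℝ) * Real.exp (t * (M - 2 * δ)) := by
            rw [Finset.sum_const, nsmul_eq_mul]
    have hB : Real.exp (t * (M - δ)) <
        ∑ e ∈ I, Real.exp (t * (‖Uext W f w e.2 - Uext W f w e.1‖ / ‖e.2 - e.1‖)) := by
      have hB2 := Finset.single_le_sum
        (f := fun e : EuclideanSpace ℝ (Fin n) × EuclideanSpace ℝ (Fin n) =>
          Real.exp (t * (‖Uext W f w e.2 - Uext W f w e.1‖ / ‖e.2 - e.1‖)))
        (fun e _ => (Real.exp_pos _).le) hestar
      simp only at hB2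
      calc Real.exp (t * (M - δ))
          < Real.exp (t * (‖Uext W f w astar - Uext W f w x‖ / ‖astar - x‖)) :=
            Real.exp_lt_exp.mpr (mul_lt_mul_of_pos_left h2 ht0)
        _ ≤ _ := hB2
    have hcard : (I.card : ℝ) * Real.exp (t * (M - 2 * δ)) < Real.exp (t * (M - δ)) := by
      have hsplit2 : Real.exp (t * (M - δ)) = Real.exp (t * δ) * Real.exp (t * (M - 2 * δ)) := by
        rw [← Real.exp_add]; congr 1; ring
      rw [hsplit2]
      exact mul_lt_mul_of_pos_right h3 (Real.exp_pos _)
    have hΦlt : Φ t v < Φ t w := by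
      have hsplitv := Finset.sum_filter_add_sum_filter_not Eset (fun e => e.1 = x ∨ e.2 = x)
        (fun e => Real.exp (t * (‖Uext W f v e.2 - Uext W f v e.1‖ / ‖e.2 - e.1‖)))
      have hsplitw := Finset.sum_filter_add_sum_filter_not Eset (fun e => e.1 = x ∨ e.2 = x)
        (fun e => Real.exp (t * (‖Uext W f w e.2 - Uext W f w e.1‖ / ‖e.2 - e.1‖)))
      have hcongr : ∑ e ∈ Eset.filter (fun e => ¬(e.1 = x ∨ e.2 = x)),
          Real.exp (t * (‖Uext W f v e.2 - Uext W f v e.1‖ / ‖e.2 - e.1‖)) =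
          ∑ e ∈ Eset.filter (fun e => ¬(e.1 = x ∨ e.2 = x)),
          Real.exp (t * (‖Uext W f w e.2 - Uext W f w e.1‖ / ‖e.2 - e.1‖)) :=
        Finset.sum_congr rfl hsame
      have hIv : ∑ e ∈ I, Real.exp (t * (‖Uext W f v e.2 - Uext W f v e.1‖ / ‖e.2 - e.1‖))
          < ∑ e ∈ I, Real.exp (t * (‖Uext W f w e.2 - Uext W f w e.1‖ / ‖e.2 - e.1‖)) :=
        lt_trans (lt_of_le_of_lt hA hcard) hB
      show (fun t w => ∑ e ∈ Eset,
          Real.exp (t * (‖Uext W f w e.2 - Uext W f w e.1‖ / ‖e.2 - e.1‖))) t v <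
        (fun t w => ∑ e ∈ Eset,
          Real.exp (t * (‖Uext W f w e.2 - Uext W f w e.1‖ / ‖e.2 - e.1‖))) t w
      simp only
      rw [← hsplitv, ← hsplitw, hcongr]
      exact add_lt_add_left hIv _
    have hge : Φ t w ≤ Φ t v := (hseqmin k) hvK
    exact absurd hΦlt (not_lt.mpr hge)
  -- conclude
  have hbdd : BddAbove {r : ℝ | ∃ a ∈ V, Adj x a ∧ r = ‖Uext W f ul a - z‖ / ‖a - x‖} := by
    have hsub : {r : ℝ | ∃ a ∈ V, Adj x a ∧ r = ‖Uext W f ul a - z‖ / ‖a - x‖} ⊆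
        (fun a => ‖Uext W f ul a - z‖ / ‖a - x‖) '' ↑Sx := by
      rintro r ⟨a, haV, hadj, rfl⟩
      exact ⟨a, by simp [hSxdef, haV, hadj], rfl⟩
    exact (Sx.finite_toSet.image _).bddAbove.mono hsub
  have hnonempty : {r : ℝ | ∃ a ∈ V, Adj x a ∧
      r = ‖Uext W f ul a - Uext W f ul x‖ / ‖a - x‖}.Nonempty := by
    obtain ⟨a, haV, hadj⟩ := hnbr x hxV hxΩ
    exact ⟨_, a, haV, hadj, rfl⟩
  refine csSup_le hnonempty ?_
  rintro r ⟨a, haV, hadj, rfl⟩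
  have hmem : a ∈ Sx := Finset.mem_filter.mpr ⟨haV, hadj⟩
  calc ‖Uext W f ul a - Uext W f ul x‖ / ‖a - x‖ ≤ M := Finset.le_sup' (fun a => ‖Uext W f ul a - Uext W f ul x‖ / ‖a - x‖) hmem
    _ ≤ g z := hM z
    _ ≤ sSup {r : ℝ | ∃ a ∈ V, Adj x a ∧ r = ‖Uext W f ul a - z‖ / ‖a - x‖} := by
      apply Finset.sup'_le
      intro b hb
      exact le_csSup hbdd ⟨b, (Finset.mem_filter.mp hb).1, (Finset.mem_filter.mp hb).2, rfl⟩
end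

section
/- Let S = {x₁,…,x_N} ⊂ ℝⁿ be a finite set, u : S → ℝ, x ∈ ℝⁿ \ S, and write d_i = ‖x_i − x‖. If the pair of indices (i,j) satisfies |u(x_i)−u(x_j)|/(d_i+d_j) = max_{k,l} |u(x_k)−u(x_l)|/(d_k+d_l), then K(u,S)(x) = (d_i·u(x_j) + d_j·u(x_i))/(d_i + d_j). -/
lemma oberman_aux (N : ℕ) (d v : Fin N → ℝ) (hd : ∀ k, 0 < d k) (i j : Fin N)
    (hvij : v j ≤ v i)
    (hij : ∀ k l : Fin N, |v k - v l| / (d k + d l) ≤ |v i - v j| / (d i + d j))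
    (K : ℝ)
    (hK : sSup {r : ℝ | ∃ k : Fin N, r = |v k - K| / d k}
        ≤ sSup {r : ℝ | ∃ k : Fin N,
            r = |v k - ((d i * v j + d j * v i) / (d i + d j))| / d k}) :
    K = (d i * v j + d j * v i) / (d i + d j) := by
  set M : ℝ := (v i - v j) / (d i + d j) with hMdef
  set y : ℝ := (d i * v j + d j * v i) / (d i + d j) with hydef
  have hdij : 0 < d i + d j := by linarith [hd i, hd j]
  have habs : |v i - v j| = v i - v j := abs_of_nonneg (by linarith)
  have hM0 : 0 ≤ M := div_nonneg (by linarith) hdij.le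
  have hyj : y - v j = d j * M := by rw [hydef, hMdef]; field_simp; ring
  have hiy : v i - y = d i * M := by rw [hydef, hMdef]; field_simp; ring
  -- each element at y ≤ M
  have hbound : ∀ k, |v k - y| ≤ d k * M := by
    intro k
    rcases le_total (v k) y with h | h
    · have h1 := hij i k
      rw [habs] at h1
      have h2 : v i - v k ≤ |v i - v k| := le_abs_self _
      have h3 : |v i - v k| ≤ (d i + d k) * M := by
        rw [div_le_div_iff₀ (by linarith [hd i, hd k]) hdij] at h1
        calc |v i - v k| = |v i - v k| * (d i + d j) / (d i + d j) := by
              field_simp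
          _ ≤ (v i - v j) * (d i + d k) / (d i + d j) := by
              exact div_le_div_of_nonneg_right h1 hdij.le
          _ = (d i + d k) * M := by rw [hMdef]; ring
      rw [abs_of_nonpos (by linarith)]
      linarith
    · have h1 := hij k j
      rw [habs] at h1
      have h2 : v k - v j ≤ |v k - v j| := le_abs_self _
      have h3 : |v k - v j| ≤ (d k + d j) * M := by
        rw [div_le_div_iff₀ (by linarith [hd k, hd j]) hdij] at h1
        calc |v k - v j| = |v k - v j| * (d i + d j) / (d i + d j) := by
              field_simp
          _ ≤ (v i - v j) * (d k + d j) / (d i + d j) := by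
              exact div_le_div_of_nonneg_right h1 hdij.le
          _ = (d k + d j) * M := by rw [hMdef]; ring
      rw [abs_of_nonneg (by linarith)]
      linarith
  have hsupy : sSup {r : ℝ | ∃ k : Fin N, r = |v k - y| / d k} ≤ M := by
    apply Real.sSup_le _ hM0
    rintro r ⟨k, rfl⟩
    rw [div_le_iff₀ (hd k)]
    calc |v k - y| ≤ d k * M := hbound k
      _ = M * d k := by ring
  have hsupK : sSup {r : ℝ | ∃ k : Fin N, r = |v k - K| / d k} ≤ M := hK.trans hsupy
  have hmem : ∀ k, |v k - K| / d k ≤ M := by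
    intro k
    refine le_trans (le_csSup ?_ (show _ ∈ {r : ℝ | ∃ k : Fin N, r = |v k - K| / d k} from ⟨k, rfl⟩)) hsupK
    have : {r : ℝ | ∃ k : Fin N, r = |v k - K| / d k}
        = Set.range (fun k : Fin N => |v k - K| / d k) := by
      ext r; simp [Set.range, eq_comm]
    rw [this]
    exact (Set.finite_range _).bddAbove
  have hi' : v i - K ≤ d i * M := by
    have := hmem i
    rw [div_le_iff₀ (hd i)] at this
    calc v i - K ≤ |v i - K| := le_abs_self _
      _ ≤ M * d i := this
      _ = d i * M := by ring
  have hj' : K - v j ≤ d j * M := by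
    have := hmem j
    rw [div_le_iff₀ (hd j)] at this
    calc K - v j ≤ |v j - K| := by rw [abs_sub_comm]; exact le_abs_self _
      _ ≤ M * d j := this
      _ = d j * M := by ring
  have hsum : v i - v j = d i * M + d j * M := by
    rw [hMdef]; field_simp
  linarith

/-- Oberman's formula: let `S = {x₁, …, x_N} ⊆ ℝⁿ`, `u : S → ℝ`,
`x ∈ ℝⁿ \ S`, and `d_k = ‖x_k - x‖`. If the pair `(i, j)` maximizes
`|u x_k - u x_l| / (d_k + d_l)` over all pairs `(k, l)`, then the Kirszbraun value
`K(u,S)(x)` (the unique minimizer of `y ↦ max_{a ∈ S} |u a - y| / ‖a - x‖`) equals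
`(d_i * u x_j + d_j * u x_i) / (d_i + d_j)`. -/
theorem kirszbraun_real_oberman_formula (n N : ℕ) (hN : 0 < N)
    (p : Fin N → EuclideanSpace ℝ (Fin n)) (hp : Function.Injective p)
    (u : EuclideanSpace ℝ (Fin n) → ℝ)
    (x : EuclideanSpace ℝ (Fin n)) (hx : x ∉ Set.range p)
    (i j : Fin N)
    (hij : ∀ k l : Fin N,
      |u (p k) - u (p l)| / (‖p k - x‖ + ‖p l - x‖)
        ≤ |u (p i) - u (p j)| / (‖p i - x‖ + ‖p j - x‖))
    (K : ℝ)
    -- K = K(u,S)(x) is the minimizer of y ↦ max_{a ∈ S} |u a - y| / ‖a - x‖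
    (hK : ∀ z : ℝ,
      sSup {r : ℝ | ∃ k : Fin N, r = |u (p k) - K| / ‖p k - x‖}
        ≤ sSup {r : ℝ | ∃ k : Fin N, r = |u (p k) - z| / ‖p k - x‖}) :
    K = (‖p i - x‖ * u (p j) + ‖p j - x‖ * u (p i)) / (‖p i - x‖ + ‖p j - x‖) := by
  have hd : ∀ k : Fin N, 0 < ‖p k - x‖ := by
    intro k
    rw [norm_pos_iff, sub_ne_zero]
    intro h
    exact hx ⟨k, h⟩
  rcases le_total (u (p j)) (u (p i)) with h | h
  · exact oberman_aux N (fun k => ‖p k - x‖) (fun k => u (p k)) hd i j h hij K (hK _)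
  · have hij' : ∀ k l : Fin N,
        |u (p k) - u (p l)| / (‖p k - x‖ + ‖p l - x‖)
          ≤ |u (p j) - u (p i)| / (‖p j - x‖ + ‖p i - x‖) := by
      intro k l
      rw [abs_sub_comm (u (p j)), add_comm (‖p j - x‖)]
      exact hij k l
    have := oberman_aux N (fun k => ‖p k - x‖) (fun k => u (p k)) hd j i h hij' K (hK _)
    rw [this]
    ring_nf
end

section
/- Let G = (V,E,Ω) be a finite connected graph with V ⊂ ℝⁿ (adjacent vertices distinct as points, each vertex of V \ Ω having nonempty neighborhood), Ω ⊆ V nonempty, and f : Ω → ℝ real-valued. Then there is exactly one Kirszbraun extension u of f on G: if u and h both satisfy u = f = h on Ω, u(x) = K(u,S(x))(x) and h(x) = K(h,S(x))(x) for all x ∈ V \ Ω, then u = h. -/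
open Finset

private lemma abs_mul_max {t w : ℝ} (hw : 0 ≤ w) : |t| * w = max (t * w) (-t * w) := by
  rw [abs_eq_max_neg, max_mul_of_nonneg _ _ hw]

/-- sSup of the slope set equals a finite sup'. -/
private lemma sSup_slope_eq {α : Type*} (N : Finset α) (hN : N.Nonempty)
    (P : α → Prop) (hNP : ∀ a, a ∈ N ↔ P a) (g : α → ℝ) :
    sSup {r : ℝ | ∃ a, P a ∧ r = g a} = N.sup' hN g := by
  have hset : {r : ℝ | ∃ a, P a ∧ r = g a} = g '' (↑N : Set α) := by
    ext r
    simp only [Set.mem_setOf_eq, Set.mem_image, Finset.mem_coe, ← hNP]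
    constructor
    · rintro ⟨a, ha, rfl⟩; exact ⟨a, ha, rfl⟩
    · rintro ⟨a, ha, rfl⟩; exact ⟨a, ha, rfl⟩
  rw [hset, ← Finset.sup'_eq_csSup_image]

/-- one-sided imbalance is impossible at a minimizer -/
private lemma imbalance_aux {α : Type*} (N : Finset α) (hN : N.Nonempty)
    (w v : α → ℝ) (hw : ∀ a ∈ N, 0 < w a) (z₀ : ℝ)
    (hmin : ∀ z : ℝ, N.sup' hN (fun a => |v a - z₀| * w a)
      ≤ N.sup' hN (fun a => |v a - z| * w a)) :
    N.sup' hN (fun a => (v a - z₀) * w a) ≤ N.sup' hN (fun a => (z₀ - v a) * w a) := by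
  by_contra hcon
  push_neg at hcon
  set P := N.sup' hN (fun a => (v a - z₀) * w a) with hP
  set Q := N.sup' hN (fun a => (z₀ - v a) * w a) with hQ
  set W := N.sup' hN w with hW
  have hWpos : 0 < W := by
    obtain ⟨a, ha⟩ := hN
    exact lt_of_lt_of_le (hw a ha) (Finset.le_sup' _ ha)
  set ε := (P - Q) / (2 * W) with hε
  have hεpos : 0 < ε := div_pos (by linarith) (by linarith)
  have hkey : N.sup' hN (fun a => |v a - (z₀ + ε)| * w a) < P := by
    rw [Finset.sup'_lt_iff]
    intro a ha
    have hwa := hw a ha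
    have hwaW : w a ≤ W := Finset.le_sup' _ ha
    rw [abs_mul_max hwa.le]
    have h1 : (v a - (z₀ + ε)) * w a < P := by
      have : (v a - z₀) * w a ≤ P := Finset.le_sup' (fun a => (v a - z₀) * w a) ha
      nlinarith
    have h2 : -(v a - (z₀ + ε)) * w a < P := by
      have hq : (z₀ - v a) * w a ≤ Q := Finset.le_sup' (fun a => (z₀ - v a) * w a) ha
      have : ε * w a ≤ ε * W := by nlinarith
      have hεW : ε * W = (P - Q) / 2 := by
        field_simp [hε]
        rw [hε, div_mul_eq_mul_div, div_mul_eq_mul_div, div_eq_iff (mul_pos two_pos hWpos).ne']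
        ring
      nlinarith
    exact max_lt h1 h2
  have hPle : P ≤ N.sup' hN (fun a => |v a - z₀| * w a) := by
    apply Finset.sup'_le
    intro a ha
    refine le_trans ?_ (Finset.le_sup' (fun a => |v a - z₀| * w a) ha)
    exact mul_le_mul_of_nonneg_right (le_abs_self _) (hw a ha).le
  exact absurd ((hPle.trans (hmin (z₀ + ε)))) (not_le.mpr hkey)

private lemma balance {α : Type*} (N : Finset α) (hN : N.Nonempty)
    (w v : α → ℝ) (hw : ∀ a ∈ N, 0 < w a) (z₀ : ℝ)
    (hmin : ∀ z : ℝ, N.sup' hN (fun a => |v a - z₀| * w a)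
      ≤ N.sup' hN (fun a => |v a - z| * w a)) :
    N.sup' hN (fun a => (v a - z₀) * w a) = N.sup' hN (fun a => (z₀ - v a) * w a) := by
  refine le_antisymm (imbalance_aux N hN w v hw z₀ hmin) ?_
  have hmin' : ∀ z : ℝ, N.sup' hN (fun a => |(-v a) - (-z₀)| * w a)
      ≤ N.sup' hN (fun a => |(-v a) - z| * w a) := by
    intro z
    have := hmin (-z)
    have e1 : (fun a => |(-v a) - (-z₀)| * w a) = fun a => |v a - z₀| * w a := by
      funext a; rw [show (-v a) - (-z₀) = -(v a - z₀) by ring, abs_neg]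
    have e2 : (fun a => |(-v a) - z| * w a) = fun a => |v a - (-z)| * w a := by
      funext a; rw [show (-v a) - z = -(v a - (-z)) by ring, abs_neg]
    rw [e1, e2]
    exact this
  have := imbalance_aux N hN w (fun a => -v a) hw (-z₀) hmin'
  have e3 : (fun a => (-v a - -z₀) * w a) = fun a => (z₀ - v a) * w a := by
    funext a; ring_nf
  have e4 : (fun a => (-z₀ - -v a) * w a) = fun a => (v a - z₀) * w a := by
    funext a; ring_nf
  rw [e3, e4] at this
  exact this

/-- main comparison half -/
private lemma kirszbraun_le (n : ℕ)
    (V : Finset (EuclideanSpace ℝ (Fin n)))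
    (Adj : EuclideanSpace ℝ (Fin n) → EuclideanSpace ℝ (Fin n) → Prop)
    (hne : ∀ x y, Adj x y → x ≠ y)
    (hconn : ∀ x ∈ V, ∀ y ∈ V,
      Relation.ReflTransGen (fun a b => a ∈ V ∧ b ∈ V ∧ Adj a b) x y)
    (Ω : Finset (EuclideanSpace ℝ (Fin n))) (hΩ : Ω.Nonempty) (hΩV : Ω ⊆ V)
    (u h : EuclideanSpace ℝ (Fin n) → ℝ)
    (huh : ∀ z ∈ Ω, u z = h z)
    (huK : ∀ x ∈ V, x ∉ Ω → ∀ z : ℝ,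
      sSup {r : ℝ | ∃ a ∈ V, Adj x a ∧ r = |u a - u x| / ‖a - x‖}
        ≤ sSup {r : ℝ | ∃ a ∈ V, Adj x a ∧ r = |u a - z| / ‖a - x‖})
    (hhK : ∀ x ∈ V, x ∉ Ω → ∀ z : ℝ,
      sSup {r : ℝ | ∃ a ∈ V, Adj x a ∧ r = |h a - h x| / ‖a - x‖}
        ≤ sSup {r : ℝ | ∃ a ∈ V, Adj x a ∧ r = |h a - z| / ‖a - x‖}) :
    ∀ x ∈ V, u x ≤ h x := by
  classical
  obtain ⟨ω₀, hω₀⟩ := hΩ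
  have hV : V.Nonempty := ⟨ω₀, hΩV hω₀⟩
  set d := V.sup' hV (fun a => u a - h a) with hd
  suffices hd0 : d ≤ 0 by
    intro x hx
    have : u x - h x ≤ d := Finset.le_sup' (fun a => u a - h a) hx
    linarith
  by_contra hd0
  push_neg at hd0
  -- the argmax set
  set F := V.filter (fun a => u a - h a = d) with hFdef
  have hF : F.Nonempty := by
    obtain ⟨b, hb, hbe⟩ := Finset.exists_mem_eq_sup' hV (fun a => u a - h a)
    exact ⟨b, Finset.mem_filter.mpr ⟨hb, hbe.symm⟩⟩
  set M := F.sup' hF h with hM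
  set Fs := F.filter (fun a => h a = M) with hFsdef
  have hFs : Fs.Nonempty := by
    obtain ⟨b, hb, hbe⟩ := Finset.exists_mem_eq_sup' hF h
    exact ⟨b, Finset.mem_filter.mpr ⟨hb, hbe.symm⟩⟩
  have hFsΩ : ∀ x ∈ Fs, x ∉ Ω := by
    intro x hx hxΩ
    have hx' := Finset.mem_filter.mp (Finset.mem_filter.mp hx).1
    have := huh x hxΩ
    linarith [hx'.2]
  -- closure of Fs under adjacency
  have hclosed : ∀ x ∈ Fs, ∀ y ∈ V, Adj x y → y ∈ Fs := by
    intro x hxFs y hyV hadj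
    have hxF := (Finset.mem_filter.mp hxFs).1
    have hxM : h x = M := (Finset.mem_filter.mp hxFs).2
    have hxV : x ∈ V := (Finset.mem_filter.mp hxF).1
    have hxd : u x - h x = d := (Finset.mem_filter.mp hxF).2
    have hxΩ : x ∉ Ω := hFsΩ x hxFs
    set N := V.filter (fun a => Adj x a) with hNdef
    have hNmem : ∀ a, a ∈ N ↔ a ∈ V ∧ Adj x a := by
      intro a; simp [hNdef]
    have hN : N.Nonempty := ⟨y, (hNmem y).mpr ⟨hyV, hadj⟩⟩
    set w : EuclideanSpace ℝ (Fin n) → ℝ := fun a => ‖a - x‖⁻¹ with hwdef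
    have hw : ∀ a ∈ N, 0 < w a := by
      intro a ha
      have hxa : x ≠ a := hne x a ((hNmem a).mp ha).2
      have : a - x ≠ 0 := sub_ne_zero.mpr hxa.symm
      exact inv_pos.mpr (norm_pos_iff.mpr this)
    have hdivmul : ∀ (t : ℝ) (a : EuclideanSpace ℝ (Fin n)), t / ‖a - x‖ = t * w a := by
      intro t a; rw [div_eq_mul_inv]
    -- convert sSup statements
    have hconv : ∀ (v : EuclideanSpace ℝ (Fin n) → ℝ) (z : ℝ),
        sSup {r : ℝ | ∃ a ∈ V, Adj x a ∧ r = |v a - z| / ‖a - x‖}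
          = N.sup' hN (fun a => |v a - z| * w a) := by
      intro v z
      have := sSup_slope_eq N hN (fun a => a ∈ V ∧ Adj x a) hNmem
        (fun a => |v a - z| * w a)
      rw [← this]
      congr 1
      ext r
      simp only [Set.mem_setOf_eq, hdivmul]
      constructor
      · rintro ⟨a, ha, hb, rfl⟩; exact ⟨a, ⟨ha, hb⟩, rfl⟩
      · rintro ⟨a, ⟨ha, hb⟩, rfl⟩; exact ⟨a, ha, hb, rfl⟩
    have huB : N.sup' hN (fun a => (u a - u x) * w a)
        = N.sup' hN (fun a => (u x - u a) * w a) := by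
      apply balance N hN w u hw (u x)
      intro z
      have := huK x hxV hxΩ z
      rwa [hconv u (u x), hconv u z] at this
    have hhB : N.sup' hN (fun a => (h a - h x) * w a)
        = N.sup' hN (fun a => (h x - h a) * w a) := by
      apply balance N hN w h hw (h x)
      intro z
      have := hhK x hxV hxΩ z
      rwa [hconv h (h x), hconv h z] at this
    set Pu := N.sup' hN (fun a => (u a - u x) * w a) with hPu
    set Ph := N.sup' hN (fun a => (h a - h x) * w a) with hPh
    have hdle : ∀ a ∈ N, u a - h a ≤ d := by
      intro a ha
      exact Finset.le_sup' (fun a => u a - h a) ((hNmem a).mp ha).1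
    have hpw1 : ∀ a ∈ N, (u a - u x) * w a ≤ (h a - h x) * w a := by
      intro a ha
      have := hdle a ha
      have : u a - u x ≤ h a - h x := by linarith
      exact mul_le_mul_of_nonneg_right this (hw a ha).le
    have hpw2 : ∀ a ∈ N, (h x - h a) * w a ≤ (u x - u a) * w a := by
      intro a ha
      have := hdle a ha
      have : h x - h a ≤ u x - u a := by linarith
      exact mul_le_mul_of_nonneg_right this (hw a ha).le
    have hPuPh : Pu ≤ Ph := by
      apply Finset.sup'_le
      intro a ha
      exact (hpw1 a ha).trans (Finset.le_sup' (fun a => (h a - h x) * w a) ha)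
    have hQhQu : N.sup' hN (fun a => (h x - h a) * w a)
        ≤ N.sup' hN (fun a => (u x - u a) * w a) := by
      apply Finset.sup'_le
      intro a ha
      exact (hpw2 a ha).trans (Finset.le_sup' (fun a => (u x - u a) * w a) ha)
    have hPhPu : Ph = Pu := by
      have h1 : Ph ≤ Pu := by rw [hhB, huB]; exact hQhQu
      exact le_antisymm h1 hPuPh
    -- nonnegativity of Pu
    have hPunn : 0 ≤ Pu := by
      obtain ⟨a, ha⟩ := hN
      have h1 : (u a - u x) * w a ≤ Pu := Finset.le_sup' (fun a => (u a - u x) * w a) ha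
      have h2 : (u x - u a) * w a ≤ Pu := by
        rw [huB]; exact Finset.le_sup' (fun a => (u x - u a) * w a) ha
      nlinarith
    rcases lt_or_ge 0 Pu with hL | hL
    · -- positive sup: contradiction with maximality of M
      exfalso
      obtain ⟨b, hb, hbe⟩ := Finset.exists_mem_eq_sup' hN (fun a => (u a - u x) * w a)
      have hbV : b ∈ V := ((hNmem b).mp hb).1
      have hble : (h b - h x) * w b ≤ Ph := Finset.le_sup' (fun a => (h a - h x) * w a) hb
      have heq : (u b - u x) * w b = (h b - h x) * w b := by
        rw [← hPu] at hbe
        rw [hPhPu, hbe] at hble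
        exact le_antisymm (hpw1 b hb) hble
      have hwb := hw b hb
      have heq' : u b - u x = h b - h x := by
        have := mul_right_cancel₀ (ne_of_gt hwb) heq
        exact this
      have hbF : b ∈ F := by
        refine Finset.mem_filter.mpr ⟨hbV, ?_⟩
        linarith
      have hbMle : h b ≤ M := Finset.le_sup' h hbF
      have hpos : 0 < (h b - h x) * w b := by
        rw [← heq, ← hbe]; exact hL
      have : 0 < h b - h x := by
        by_contra hc
        push_neg at hc
        nlinarith
      rw [hxM] at this
      linarith
    · -- Pu = 0 : all neighbors constant
      have hPu0 : Pu = 0 := le_antisymm hL hPunn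
      have hall : ∀ a ∈ N, u a = u x ∧ h a = h x := by
        intro a ha
        have h1 : (u a - u x) * w a ≤ 0 := hPu0 ▸ Finset.le_sup' (fun a => (u a - u x) * w a) ha
        have h2 : (u x - u a) * w a ≤ 0 := by
          have := Finset.le_sup' (fun a => (u x - u a) * w a) ha
          rw [← huB, hPu0] at this
          exact this
        have h3 : (h a - h x) * w a ≤ 0 := by
          have := Finset.le_sup' (fun a => (h a - h x) * w a) ha
          rw [← hPh, hPhPu, hPu0] at this
          exact this
        have h4 : (h x - h a) * w a ≤ 0 := by
          have := Finset.le_sup' (fun a => (h x - h a) * w a) ha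
          rw [← hhB, hPhPu, hPu0] at this
          exact this
        have hwa := hw a ha
        constructor <;> nlinarith
      have hy := hall y ((hNmem y).mpr ⟨hyV, hadj⟩)
      refine Finset.mem_filter.mpr ⟨Finset.mem_filter.mpr ⟨hyV, ?_⟩, ?_⟩
      · rw [hy.1, hy.2]; exact hxd
      · rw [hy.2]; exact hxM
  -- connectivity: propagate Fs to Ω
  obtain ⟨x₀, hx₀⟩ := hFs
  have hx₀V : x₀ ∈ V := (Finset.mem_filter.mp (Finset.mem_filter.mp hx₀).1).1
  have hpath := hconn x₀ hx₀V ω₀ (hΩV hω₀)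
  have hω₀Fs : ω₀ ∈ Fs := by
    clear hω₀
    induction hpath with
    | refl => exact hx₀
    | tail h₁ h₂ ih => exact hclosed _ ih _ h₂.2.1 h₂.2.2
  exact hFsΩ ω₀ hω₀Fs hω₀

/-- on a finite connected graph `G = (V, E, Ω)` with `V ⊆ ℝⁿ`, adjacent
vertices distinct, each vertex of `V \ Ω` having a nonempty neighborhood, and `Ω ⊆ V`
nonempty, a real-valued `f : Ω → ℝ` has at most one Kirszbraun extension: if `u` and `h`
both agree with `f` on `Ω` and satisfy `u x = K(u, S(x))(x)` and `h x = K(h, S(x))(x)`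
(i.e. their values at each `x ∈ V \ Ω` minimize the corresponding local sup of slopes),
then `u = h` on `V`. -/
theorem kirszbraun_extension_unique_real (n : ℕ)
    (V : Finset (EuclideanSpace ℝ (Fin n)))
    (Adj : EuclideanSpace ℝ (Fin n) → EuclideanSpace ℝ (Fin n) → Prop)
    (hsymm : ∀ x y, Adj x y → Adj y x)
    (hne : ∀ x y, Adj x y → x ≠ y)
    (hconn : ∀ x ∈ V, ∀ y ∈ V,
      Relation.ReflTransGen (fun a b => a ∈ V ∧ b ∈ V ∧ Adj a b) x y)
    (Ω : Finset (EuclideanSpace ℝ (Fin n))) (hΩ : Ω.Nonempty) (hΩV : Ω ⊆ V)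
    (hnbr : ∀ x ∈ V, x ∉ Ω → ∃ y ∈ V, Adj x y)
    (f u h : EuclideanSpace ℝ (Fin n) → ℝ)
    (huf : ∀ z ∈ Ω, u z = f z) (hhf : ∀ z ∈ Ω, h z = f z)
    (huK : ∀ x ∈ V, x ∉ Ω → ∀ z : ℝ,
      sSup {r : ℝ | ∃ a ∈ V, Adj x a ∧ r = |u a - u x| / ‖a - x‖}
        ≤ sSup {r : ℝ | ∃ a ∈ V, Adj x a ∧ r = |u a - z| / ‖a - x‖})
    (hhK : ∀ x ∈ V, x ∉ Ω → ∀ z : ℝ,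
      sSup {r : ℝ | ∃ a ∈ V, Adj x a ∧ r = |h a - h x| / ‖a - x‖}
        ≤ sSup {r : ℝ | ∃ a ∈ V, Adj x a ∧ r = |h a - z| / ‖a - x‖}) :
    ∀ x ∈ V, u x = h x := by
  have huh : ∀ z ∈ Ω, u z = h z := fun z hz => (huf z hz).trans (hhf z hz).symm
  have h1 := kirszbraun_le n V Adj hne hconn Ω hΩ hΩV u h huh huK hhK
  have h2 := kirszbraun_le n V Adj hne hconn Ω hΩ hΩV h u
    (fun z hz => (huh z hz).symm) hhK huK
  exact fun x hx => le_antisymm (h1 x hx) (h2 x hx)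
end

section
/- Let G = (V,E,Ω) be a finite connected graph with V ⊂ ℝⁿ (adjacent vertices distinct as points, each vertex of V \ Ω having nonempty neighborhood), Ω ⊆ V nonempty, f : Ω → ℝ, and let u be a Kirszbraun extension of f on G. Then sup_{x≠y∈V} |u(x)−u(y)|/d_g(x,y) ≤ sup_{x≠y∈Ω} |f(x)−f(y)|/d_g(x,y), where d_g is the geodesic metric of G. -/
/-- The geodesic metric of the graph with vertex set `V` and adjacency `Adj`:
`d_g(x,y)` is the infimum of lengths `∑ᵢ ‖c (i+1) - c i‖` of chains
`c 0 = x, …, c k = y` of vertices of `V` with consecutive vertices adjacent. -/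
noncomputable def geodDist {n : ℕ} (V : Finset (EuclideanSpace ℝ (Fin n)))
    (Adj : EuclideanSpace ℝ (Fin n) → EuclideanSpace ℝ (Fin n) → Prop)
    (x y : EuclideanSpace ℝ (Fin n)) : ℝ :=
  sInf {r : ℝ | ∃ (k : ℕ) (c : Fin (k + 1) → EuclideanSpace ℝ (Fin n)),
    c 0 = x ∧ c (Fin.last k) = y ∧ (∀ i, c i ∈ V) ∧
    (∀ i : Fin k, Adj (c i.castSucc) (c i.succ)) ∧
    r = ∑ i : Fin k, ‖c i.succ - c i.castSucc‖}

def chainSet {n : ℕ} (V : Finset (EuclideanSpace ℝ (Fin n)))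
    (Adj : EuclideanSpace ℝ (Fin n) → EuclideanSpace ℝ (Fin n) → Prop)
    (x y : EuclideanSpace ℝ (Fin n)) : Set ℝ :=
  {r : ℝ | ∃ (k : ℕ) (c : Fin (k + 1) → EuclideanSpace ℝ (Fin n)),
    c 0 = x ∧ c (Fin.last k) = y ∧ (∀ i, c i ∈ V) ∧
    (∀ i : Fin k, Adj (c i.castSucc) (c i.succ)) ∧
    r = ∑ i : Fin k, ‖c i.succ - c i.castSucc‖}

lemma geodDist_eq {n : ℕ} (V : Finset (EuclideanSpace ℝ (Fin n))) (Adj) (x y) :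
    geodDist V Adj x y = sInf (chainSet V Adj x y) := rfl

variable {n : ℕ} {V : Finset (EuclideanSpace ℝ (Fin n))}
  {Adj : EuclideanSpace ℝ (Fin n) → EuclideanSpace ℝ (Fin n) → Prop}

lemma chainSet_nonneg {x y r} (hr : r ∈ chainSet V Adj x y) : 0 ≤ r := by
  obtain ⟨k, c, -, -, -, -, rfl⟩ := hr
  positivity

lemma chainSet_bddBelow (x y : EuclideanSpace ℝ (Fin n)) :
    BddBelow (chainSet V Adj x y) := ⟨0, fun r hr => chainSet_nonneg hr⟩

lemma zero_mem_chainSet {x} (hx : x ∈ V) : (0:ℝ) ∈ chainSet V Adj x x := by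
  refine ⟨0, fun _ => x, rfl, rfl, fun _ => hx, fun i => i.elim0, by simp⟩

lemma chainSet_snoc {x y b r} (hr : r ∈ chainSet V Adj x y) (hb : b ∈ V)
    (hadj : Adj y b) : r + ‖b - y‖ ∈ chainSet V Adj x b := by
  obtain ⟨k, c, hc0, hclast, hcV, hcadj, rfl⟩ := hr
  refine ⟨k + 1, Fin.snoc c b, ?_, ?_, ?_, ?_, ?_⟩
  · rw [show (0 : Fin (k+1+1)) = (0:Fin (k+1)).castSucc from rfl, Fin.snoc_castSucc, hc0]
  · simp
  · intro i
    induction i using Fin.lastCases with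
    | last => simp [hb]
    | cast j => simp [hcV j]
  · intro i
    induction i using Fin.lastCases with
    | last =>
      rw [Fin.snoc_castSucc, hclast, Fin.succ_last, Fin.snoc_last]
      exact hadj
    | cast j =>
      rw [Fin.snoc_castSucc, Fin.succ_castSucc, Fin.snoc_castSucc]
      exact hcadj j
  · rw [Fin.sum_univ_castSucc]
    congr 1
    · refine Finset.sum_congr rfl fun j _ => ?_
      rw [Fin.succ_castSucc, Fin.snoc_castSucc, Fin.snoc_castSucc]
    · rw [Fin.succ_last, Fin.snoc_last, Fin.snoc_castSucc, hclast]

lemma chainSet_nonempty {x y : EuclideanSpace ℝ (Fin n)} (hx : x ∈ V)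
    (h : Relation.ReflTransGen (fun a b => a ∈ V ∧ b ∈ V ∧ Adj a b) x y) :
    (chainSet V Adj x y).Nonempty := by
  induction h with
  | refl => exact ⟨0, zero_mem_chainSet hx⟩
  | tail hbc hab ih =>
    obtain ⟨r, hr⟩ := ih
    exact ⟨_, chainSet_snoc hr hab.2.1 hab.2.2⟩

lemma chain_telescope {F : Type*} [SeminormedAddCommGroup F]
    (φ : EuclideanSpace ℝ (Fin n) → F) (C : ℝ)
    (hC : ∀ a b, a ∈ V → b ∈ V → Adj a b → ‖φ b - φ a‖ ≤ C * ‖b - a‖)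
    {x y r} (hr : r ∈ chainSet V Adj x y) : ‖φ y - φ x‖ ≤ C * r := by
  obtain ⟨k, c, rfl, rfl, hcV, hcadj, rfl⟩ := hr
  induction k with
  | zero => simp
  | succ k ih =>
    have h1 := ih (c ∘ Fin.castSucc) (fun i => hcV _)
      (fun j => by
        have := hcadj j.castSucc
        rwa [Fin.succ_castSucc] at this)
    simp only [Function.comp, Fin.castSucc_zero] at h1
    have h2 : ‖φ (c (Fin.last (k+1))) - φ (c (Fin.last k).castSucc)‖
        ≤ C * ‖c (Fin.last (k+1)) - c (Fin.last k).castSucc‖ := by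
      have := hcadj (Fin.last k)
      rw [Fin.succ_last] at this
      exact hC _ _ (hcV _) (hcV _) this
    calc ‖φ (c (Fin.last (k+1))) - φ (c 0)‖
        ≤ ‖φ (c (Fin.last (k+1))) - φ (c (Fin.last k).castSucc)‖
          + ‖φ (c (Fin.last k).castSucc) - φ (c 0)‖ := norm_sub_le_norm_sub_add_norm_sub _ _ _
      _ ≤ C * ‖c (Fin.last (k+1)) - c (Fin.last k).castSucc‖
          + C * ∑ i : Fin k, ‖(c ∘ Fin.castSucc) i.succ - (c ∘ Fin.castSucc) i.castSucc‖ := by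
          exact add_le_add h2 h1
      _ = C * ∑ i : Fin (k+1), ‖c i.succ - c i.castSucc‖ := by
          rw [Fin.sum_univ_castSucc, mul_add]
          simp only [Function.comp, Fin.succ_castSucc, Fin.succ_last]
          ring

lemma geodDist_nonneg (x y : EuclideanSpace ℝ (Fin n)) : 0 ≤ geodDist V Adj x y :=
  Real.sInf_nonneg fun _ hr => chainSet_nonneg hr

lemma norm_le_geodDist {x y : EuclideanSpace ℝ (Fin n)}
    (hne : (chainSet V Adj x y).Nonempty) : ‖y - x‖ ≤ geodDist V Adj x y := by
  rw [geodDist_eq]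
  refine le_csInf hne fun r hr => ?_
  have := chain_telescope (V := V) (Adj := Adj) id 1
    (fun a b _ _ _ => by simp) hr
  simpa using this

lemma geodDist_self {x : EuclideanSpace ℝ (Fin n)} (hx : x ∈ V) :
    geodDist V Adj x x = 0 :=
  le_antisymm (csInf_le (chainSet_bddBelow x x) (zero_mem_chainSet hx))
    (geodDist_nonneg x x)

lemma geodDist_le_add_edge {w x b : EuclideanSpace ℝ (Fin n)}
    (hne : (chainSet V Adj w x).Nonempty) (hb : b ∈ V) (hadj : Adj x b) :
    geodDist V Adj w b ≤ geodDist V Adj w x + ‖b - x‖ := by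
  have h : ∀ r ∈ chainSet V Adj w x, geodDist V Adj w b - ‖b - x‖ ≤ r := by
    intro r hr
    have hmem := chainSet_snoc hr hb hadj
    have := csInf_le (chainSet_bddBelow w b) hmem
    rw [geodDist_eq]; linarith
  have := le_csInf hne h
  rw [geodDist_eq V Adj w x]; linarith

lemma keystep (hne : ∀ x y, Adj x y → x ≠ y)
    (v : EuclideanSpace ℝ (Fin n) → ℝ) (S : ℝ) (hS : 0 < S)
    (hedge : ∀ a b, a ∈ V → b ∈ V → Adj a b → |v b - v a| ≤ S * ‖b - a‖)
    (x : EuclideanSpace ℝ (Fin n)) (hx : x ∈ V)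
    (hK : ∀ z : ℝ, sSup {r : ℝ | ∃ a ∈ V, Adj x a ∧ r = |v a - v x| / ‖a - x‖}
      ≤ sSup {r : ℝ | ∃ a ∈ V, Adj x a ∧ r = |v a - z| / ‖a - x‖})
    (a₀ : EuclideanSpace ℝ (Fin n)) (ha₀ : a₀ ∈ V) (hadj₀ : Adj x a₀)
    (h₀ : v x - v a₀ = S * ‖a₀ - x‖) :
    ∃ b ∈ V, Adj x b ∧ v b - v x = S * ‖b - x‖ := by
  classical
  by_contra hcon
  push_neg at hcon
  set N := V.filter (fun a => Adj x a) with hNdef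
  have hNmem : ∀ a, a ∈ N ↔ a ∈ V ∧ Adj x a := by
    intro a; simp [hNdef]
  have hNne : N.Nonempty := ⟨a₀, (hNmem a₀).mpr ⟨ha₀, hadj₀⟩⟩
  have hpos : ∀ a ∈ N, 0 < ‖a - x‖ := by
    intro a ha
    rw [norm_pos_iff, sub_ne_zero]
    exact (hne x a ((hNmem a).mp ha).2).symm
  have habs : ∀ a ∈ N, |v a - v x| ≤ S * ‖a - x‖ := by
    intro a ha
    exact hedge x a hx ((hNmem a).mp ha).1 ((hNmem a).mp ha).2
  have hgap : ∀ a ∈ N, v a - v x < S * ‖a - x‖ := by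
    intro a ha
    exact lt_of_le_of_ne (le_trans (le_abs_self _) (habs a ha))
      (hcon a ((hNmem a).mp ha).1 ((hNmem a).mp ha).2)
  set δ := (N.inf' hNne fun a => S * ‖a - x‖ - (v a - v x)) / 2 with hδdef
  have hδpos : 0 < δ := by
    apply half_pos
    rw [Finset.lt_inf'_iff]
    intro a ha; linarith [hgap a ha]
  have hδle : ∀ a ∈ N, 2 * δ ≤ S * ‖a - x‖ - (v a - v x) := by
    intro a ha
    have := Finset.inf'_le (fun a => S * ‖a - x‖ - (v a - v x)) ha
    rw [hδdef]; linarith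
  set D := N.sup' hNne fun a => ‖a - x‖ with hDdef
  have hD : 0 < D := by
    rw [hDdef]
    exact lt_of_lt_of_le (hpos a₀ ((hNmem a₀).mpr ⟨ha₀, hadj₀⟩))
      (Finset.le_sup' (fun a => ‖a - x‖) ((hNmem a₀).mpr ⟨ha₀, hadj₀⟩))
  have hbound : ∀ a ∈ N, |v a - (v x - δ)| / ‖a - x‖ ≤ S - δ / D := by
    intro a ha
    have h1 : |v a - (v x - δ)| ≤ S * ‖a - x‖ - δ := by
      rw [abs_le]
      constructor
      · linarith [neg_abs_le (v a - v x), habs a ha]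
      · linarith [hδle a ha]
    have h2 : |v a - (v x - δ)| / ‖a - x‖ ≤ (S * ‖a - x‖ - δ) / ‖a - x‖ :=
      div_le_div_of_nonneg_right h1 (hpos a ha).le
    have h3 : (S * ‖a - x‖ - δ) / ‖a - x‖ = S - δ / ‖a - x‖ := by
      rw [sub_div, mul_div_assoc, div_self (hpos a ha).ne', mul_one]
    have h4 : δ / D ≤ δ / ‖a - x‖ :=
      div_le_div_of_nonneg_left hδpos.le (hpos a ha) (by rw [hDdef]; exact Finset.le_sup' (fun a => ‖a - x‖) ha)
    calc |v a - (v x - δ)| / ‖a - x‖ ≤ S - δ / ‖a - x‖ := by rw [← h3]; exact h2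
      _ ≤ S - δ / D := by linarith
  have hupper : sSup {r : ℝ | ∃ a ∈ V, Adj x a ∧ r = |v a - (v x - δ)| / ‖a - x‖}
      ≤ S - δ / D := by
    apply Real.sSup_le
    · rintro r ⟨a, haV, hadj, rfl⟩
      exact hbound a ((hNmem a).mpr ⟨haV, hadj⟩)
    · have := hbound a₀ ((hNmem a₀).mpr ⟨ha₀, hadj₀⟩)
      have h0 : (0:ℝ) ≤ |v a₀ - (v x - δ)| / ‖a₀ - x‖ :=
        div_nonneg (abs_nonneg _) (norm_nonneg _)
      linarith
  have hlower : S ≤ sSup {r : ℝ | ∃ a ∈ V, Adj x a ∧ r = |v a - v x| / ‖a - x‖} := by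
    apply le_csSup
    · refine ⟨S, ?_⟩
      rintro r ⟨a, haV, hadj, rfl⟩
      rw [div_le_iff₀ (hpos a ((hNmem a).mpr ⟨haV, hadj⟩))]
      exact habs a ((hNmem a).mpr ⟨haV, hadj⟩)
    · refine ⟨a₀, ha₀, hadj₀, ?_⟩
      have hpos₀ := hpos a₀ ((hNmem a₀).mpr ⟨ha₀, hadj₀⟩)
      rw [abs_sub_comm, abs_of_nonneg (by nlinarith), h₀,
        mul_div_assoc, div_self hpos₀.ne', mul_one]
  have := hK (v x - δ)
  have hdD : 0 < δ / D := div_pos hδpos hD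
  linarith

lemma climb
    (hconn : ∀ x ∈ V, ∀ y ∈ V,
      Relation.ReflTransGen (fun a b => a ∈ V ∧ b ∈ V ∧ Adj a b) x y)
    (hne : ∀ x y, Adj x y → x ≠ y) (hsymm : ∀ x y, Adj x y → Adj y x)
    (Ω : Finset (EuclideanSpace ℝ (Fin n)))
    (v : EuclideanSpace ℝ (Fin n) → ℝ) (S : ℝ) (hS : 0 < S)
    (hstep : ∀ x ∈ V, x ∉ Ω →
      (∃ a ∈ V, Adj x a ∧ v x - v a = S * ‖a - x‖) →
      ∃ b ∈ V, Adj x b ∧ v b - v x = S * ‖b - x‖) :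
    ∀ (m : ℕ) (x), x ∈ V → ((V.filter fun w => v x < v w).card ≤ m) →
      (x ∈ Ω ∨ ∃ a ∈ V, Adj x a ∧ v x - v a = S * ‖a - x‖) →
      ∃ p ∈ Ω, v x ≤ v p ∧ ∀ w ∈ V, S * (geodDist V Adj w p - geodDist V Adj w x)
        ≤ v p - v x := by
  classical
  intro m
  induction m with
  | zero =>
    intro x hx hcard hyp
    rcases hyp with hxΩ | hyp
    · exact ⟨x, hxΩ, le_refl _, fun w _ => by simp⟩
    by_cases hxΩ : x ∈ Ω
    · exact ⟨x, hxΩ, le_refl _, fun w _ => by simp⟩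
    obtain ⟨b, hbV, hbadj, hbeq⟩ := hstep x hx hxΩ hyp
    have hvb : v x < v b := by
      have : 0 < ‖b - x‖ := by
        rw [norm_pos_iff, sub_ne_zero]; exact (hne x b hbadj).symm
      nlinarith
    have : b ∈ V.filter fun w => v x < v w := Finset.mem_filter.mpr ⟨hbV, hvb⟩
    have := Finset.card_pos.mpr ⟨b, this⟩
    omega
  | succ m ih =>
    intro x hx hcard hyp
    by_cases hxΩ : x ∈ Ω
    · exact ⟨x, hxΩ, le_refl _, fun w _ => by simp⟩
    have hyp' : ∃ a ∈ V, Adj x a ∧ v x - v a = S * ‖a - x‖ := by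
      rcases hyp with h | h
      · exact absurd h hxΩ
      · exact h
    obtain ⟨b, hbV, hbadj, hbeq⟩ := hstep x hx hxΩ hyp'
    have hbx : b ≠ x := (hne x b hbadj).symm
    have hnorm : 0 < ‖b - x‖ := by rw [norm_pos_iff, sub_ne_zero]; exact hbx
    have hvb : v x < v b := by nlinarith
    have hsub : (V.filter fun w => v b < v w) ⊆ (V.filter fun w => v x < v w).erase b := by
      intro w hw
      rw [Finset.mem_filter] at hw
      refine Finset.mem_erase.mpr ⟨?_, Finset.mem_filter.mpr ⟨hw.1, lt_trans hvb hw.2⟩⟩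
      rintro rfl; exact absurd hw.2 (lt_irrefl _)
    have hbmem : b ∈ V.filter fun w => v x < v w := Finset.mem_filter.mpr ⟨hbV, hvb⟩
    have hcard' : (V.filter fun w => v b < v w).card ≤ m := by
      have h1 := Finset.card_le_card hsub
      have h2 := Finset.card_erase_of_mem hbmem
      have h3 := Finset.card_pos.mpr ⟨b, hbmem⟩
      omega
    obtain ⟨p, hpΩ, hvp, hbound⟩ := ih b hbV hcard'
      (Or.inr ⟨x, hx, hsymm x b hbadj, by rw [norm_sub_rev x b]; exact hbeq⟩)
    refine ⟨p, hpΩ, le_trans hvb.le hvp, fun w hw => ?_⟩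
    have hedgeext : geodDist V Adj w b ≤ geodDist V Adj w x + ‖b - x‖ :=
      geodDist_le_add_edge (chainSet_nonempty hw (hconn w hw x hx)) hbV hbadj
    have h5 := hbound w hw
    nlinarith [hS.le, mul_le_mul_of_nonneg_left hedgeext hS.le]

lemma climb_desc
    (hconn : ∀ x ∈ V, ∀ y ∈ V,
      Relation.ReflTransGen (fun a b => a ∈ V ∧ b ∈ V ∧ Adj a b) x y)
    (hne : ∀ x y, Adj x y → x ≠ y) (hsymm : ∀ x y, Adj x y → Adj y x)
    (Ω : Finset (EuclideanSpace ℝ (Fin n))) (hΩV : Ω ⊆ V)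
    (v : EuclideanSpace ℝ (Fin n) → ℝ) (S : ℝ) (hS : 0 < S)
    (hstep : ∀ x ∈ V, x ∉ Ω →
      (∃ a ∈ V, Adj x a ∧ v a - v x = S * ‖a - x‖) →
      ∃ b ∈ V, Adj x b ∧ v x - v b = S * ‖b - x‖) :
    ∀ (m : ℕ) (x), x ∈ V → ((V.filter fun w => v w < v x).card ≤ m) →
      (x ∈ Ω ∨ ∃ a ∈ V, Adj x a ∧ v a - v x = S * ‖a - x‖) →
      ∃ q ∈ Ω, v q ≤ v x ∧ S * geodDist V Adj q x ≤ v x - v q := by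
  classical
  intro m
  induction m with
  | zero =>
    intro x hx hcard hyp
    rcases hyp with hxΩ | hyp
    · exact ⟨x, hxΩ, le_refl _, by rw [geodDist_self hx]; simp⟩
    by_cases hxΩ : x ∈ Ω
    · exact ⟨x, hxΩ, le_refl _, by rw [geodDist_self hx]; simp⟩
    obtain ⟨b, hbV, hbadj, hbeq⟩ := hstep x hx hxΩ hyp
    have hvb : v b < v x := by
      have : 0 < ‖b - x‖ := by
        rw [norm_pos_iff, sub_ne_zero]; exact (hne x b hbadj).symm
      nlinarith
    have : b ∈ V.filter fun w => v w < v x := Finset.mem_filter.mpr ⟨hbV, hvb⟩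
    have := Finset.card_pos.mpr ⟨b, this⟩
    omega
  | succ m ih =>
    intro x hx hcard hyp
    by_cases hxΩ : x ∈ Ω
    · exact ⟨x, hxΩ, le_refl _, by rw [geodDist_self hx]; simp⟩
    have hyp' : ∃ a ∈ V, Adj x a ∧ v a - v x = S * ‖a - x‖ := by
      rcases hyp with h | h
      · exact absurd h hxΩ
      · exact h
    obtain ⟨b, hbV, hbadj, hbeq⟩ := hstep x hx hxΩ hyp'
    have hbx : b ≠ x := (hne x b hbadj).symm
    have hnorm : 0 < ‖b - x‖ := by rw [norm_pos_iff, sub_ne_zero]; exact hbx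
    have hvb : v b < v x := by nlinarith
    have hsub : (V.filter fun w => v w < v b) ⊆ (V.filter fun w => v w < v x).erase b := by
      intro w hw
      rw [Finset.mem_filter] at hw
      refine Finset.mem_erase.mpr ⟨?_, Finset.mem_filter.mpr ⟨hw.1, lt_trans hw.2 hvb⟩⟩
      rintro rfl; exact absurd hw.2 (lt_irrefl _)
    have hbmem : b ∈ V.filter fun w => v w < v x := Finset.mem_filter.mpr ⟨hbV, hvb⟩
    have hcard' : (V.filter fun w => v w < v b).card ≤ m := by
      have h1 := Finset.card_le_card hsub
      have h2 := Finset.card_erase_of_mem hbmem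
      have h3 := Finset.card_pos.mpr ⟨b, hbmem⟩
      omega
    obtain ⟨q, hqΩ, hvq, hbound⟩ := ih b hbV hcard'
      (Or.inr ⟨x, hx, hsymm x b hbadj, by rw [norm_sub_rev x b]; exact hbeq⟩)
    refine ⟨q, hqΩ, le_trans hvq hvb.le, ?_⟩
    have hqV : q ∈ V := hΩV hqΩ
    have hext : geodDist V Adj q x ≤ geodDist V Adj q b + ‖x - b‖ :=
      geodDist_le_add_edge (chainSet_nonempty hqV (hconn q hqV b hbV)) hx (hsymm x b hbadj)
    have hmul := mul_le_mul_of_nonneg_left hext hS.le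
    rw [mul_add, norm_sub_rev x b] at hmul
    linarith

/-- if `u` is a Kirszbraun extension of `f : Ω → ℝ` on the finite connected
graph `G = (V, E, Ω)`, then the best Lipschitz constant of `u` on `V` with respect to the
geodesic metric `d_g` is at most that of `f` on `Ω`. -/
theorem kirszbraun_extension_geodesic_lipschitz (n : ℕ)
    (V : Finset (EuclideanSpace ℝ (Fin n)))
    (Adj : EuclideanSpace ℝ (Fin n) → EuclideanSpace ℝ (Fin n) → Prop)
    (hsymm : ∀ x y, Adj x y → Adj y x)
    (hne : ∀ x y, Adj x y → x ≠ y)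
    (hconn : ∀ x ∈ V, ∀ y ∈ V,
      Relation.ReflTransGen (fun a b => a ∈ V ∧ b ∈ V ∧ Adj a b) x y)
    (Ω : Finset (EuclideanSpace ℝ (Fin n))) (hΩ : Ω.Nonempty) (hΩV : Ω ⊆ V)
    (hnbr : ∀ x ∈ V, x ∉ Ω → ∃ y ∈ V, Adj x y)
    (f u : EuclideanSpace ℝ (Fin n) → ℝ)
    -- u is a Kirszbraun extension of f on G
    (huf : ∀ z ∈ Ω, u z = f z)
    (huK : ∀ x ∈ V, x ∉ Ω → ∀ z : ℝ,
      sSup {r : ℝ | ∃ a ∈ V, Adj x a ∧ r = |u a - u x| / ‖a - x‖}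
        ≤ sSup {r : ℝ | ∃ a ∈ V, Adj x a ∧ r = |u a - z| / ‖a - x‖}) :
    sSup {r : ℝ | ∃ x ∈ V, ∃ y ∈ V, x ≠ y ∧ r = |u x - u y| / geodDist V Adj x y}
      ≤ sSup {r : ℝ | ∃ x ∈ Ω, ∃ y ∈ Ω, x ≠ y ∧ r = |f x - f y| / geodDist V Adj x y} := by
  classical
  set Lset := {r : ℝ | ∃ x ∈ Ω, ∃ y ∈ Ω, x ≠ y ∧ r = |f x - f y| / geodDist V Adj x y}
    with hLsetdef
  set L := sSup Lset with hLdef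
  have hL0 : 0 ≤ L := by
    apply Real.sSup_nonneg
    rintro r ⟨x, -, y, -, -, rfl⟩
    exact div_nonneg (abs_nonneg _) (geodDist_nonneg x y)
  have hLbdd : BddAbove Lset := by
    apply Set.Finite.bddAbove
    apply Set.Finite.subset
      (Finset.finite_toSet ((Ω ×ˢ Ω).image fun p => |f p.1 - f p.2| / geodDist V Adj p.1 p.2))
    rintro r ⟨x, hx, y, hy, -, rfl⟩
    simp only [Finset.coe_image, Set.mem_image, Finset.mem_coe, Finset.mem_product]
    exact ⟨(x, y), by simp [hx, hy]⟩
  -- per-edge bound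
  have hedgeL : ∀ a b, a ∈ V → b ∈ V → Adj a b → |u b - u a| ≤ L * ‖b - a‖ := by
    intro a b ha hb hab
    set P := (V ×ˢ V).filter fun p => Adj p.1 p.2 with hPdef
    have hPmem : (a, b) ∈ P := by
      rw [hPdef, Finset.mem_filter, Finset.mem_product]; exact ⟨⟨ha, hb⟩, hab⟩
    have hPne : P.Nonempty := ⟨(a, b), hPmem⟩
    set S := P.sup' hPne (fun p => |u p.1 - u p.2| / ‖p.1 - p.2‖) with hSdef
    have hnormP : ∀ p ∈ P, (0:ℝ) < ‖p.1 - p.2‖ := by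
      intro p hp
      rw [hPdef, Finset.mem_filter] at hp
      rw [norm_pos_iff, sub_ne_zero]
      exact hne _ _ hp.2
    have hSedge : ∀ a' b', a' ∈ V → b' ∈ V → Adj a' b' → |u b' - u a'| ≤ S * ‖b' - a'‖ := by
      intro a' b' ha' hb' hab'
      have hmem : (a', b') ∈ P := by
        rw [hPdef, Finset.mem_filter, Finset.mem_product]; exact ⟨⟨ha', hb'⟩, hab'⟩
      have h1 : |u a' - u b'| / ‖a' - b'‖ ≤ S := by
        rw [hSdef]; exact Finset.le_sup' (fun p => |u p.1 - u p.2| / ‖p.1 - p.2‖) hmem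
      have h2 : (0:ℝ) < ‖a' - b'‖ := hnormP (a', b') hmem
      rw [div_le_iff₀ h2] at h1
      rw [abs_sub_comm, norm_sub_rev]
      exact h1
    have hS0 : 0 ≤ S := by
      have := Finset.le_sup' (fun p => |u p.1 - u p.2| / ‖p.1 - p.2‖) hPmem
      rw [← hSdef] at this
      exact le_trans (div_nonneg (abs_nonneg _) (norm_nonneg _)) this
    rcases hS0.eq_or_lt with hSeq | hSpos
    · have := hSedge a b ha hb hab
      rw [← hSeq] at this
      have hLn : 0 ≤ L * ‖b - a‖ := mul_nonneg hL0 (norm_nonneg _)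
      linarith
    -- 0 < S : show S ≤ L
    have hSL : S ≤ L := by
      obtain ⟨p₀, hp₀P, hp₀eq⟩ := Finset.exists_mem_eq_sup' hPne
        (fun p => |u p.1 - u p.2| / ‖p.1 - p.2‖)
      have hp₀ : p₀.1 ∈ V ∧ p₀.2 ∈ V ∧ Adj p₀.1 p₀.2 := by
        rw [hPdef, Finset.mem_filter, Finset.mem_product] at hp₀P
        exact ⟨hp₀P.1.1, hp₀P.1.2, hp₀P.2⟩
      have hp₀n : (0:ℝ) < ‖p₀.1 - p₀.2‖ := hnormP p₀ hp₀P
      have hp₀abs : |u p₀.1 - u p₀.2| = S * ‖p₀.1 - p₀.2‖ := by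
        rw [hSdef, hp₀eq, div_mul_cancel₀ _ hp₀n.ne']
      -- orient the maximal edge
      obtain ⟨x₀, x₁, hx₀V, hx₁V, hadj01, heq01⟩ :
          ∃ x₀ x₁, x₀ ∈ V ∧ x₁ ∈ V ∧ Adj x₀ x₁ ∧ u x₁ - u x₀ = S * ‖x₁ - x₀‖ := by
        rcases le_total (u p₀.1) (u p₀.2) with hle | hle
        · refine ⟨p₀.1, p₀.2, hp₀.1, hp₀.2.1, hp₀.2.2, ?_⟩
          rw [abs_sub_comm, abs_of_nonneg (by linarith)] at hp₀abs
          rw [norm_sub_rev]; exact hp₀abs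
        · refine ⟨p₀.2, p₀.1, hp₀.2.1, hp₀.1, hsymm _ _ hp₀.2.2, ?_⟩
          rw [abs_of_nonneg (by linarith)] at hp₀abs
          exact hp₀abs
      set v : EuclideanSpace ℝ (Fin n) → ℝ := fun w => -(u w) with hvdef
      have hedgev : ∀ a' b', a' ∈ V → b' ∈ V → Adj a' b' → |v b' - v a'| ≤ S * ‖b' - a'‖ := by
        intro a' b' ha' hb' hab'
        rw [hvdef]
        simp only [neg_sub_neg]
        rw [abs_sub_comm]
        exact hSedge a' b' ha' hb' hab'
      have hstepu : ∀ x ∈ V, x ∉ Ω →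
          (∃ a' ∈ V, Adj x a' ∧ u x - u a' = S * ‖a' - x‖) →
          ∃ b' ∈ V, Adj x b' ∧ u b' - u x = S * ‖b' - x‖ := by
        rintro x hx hxΩ ⟨a', ha', hadj', heq'⟩
        exact keystep hne u S hSpos hSedge x hx (huK x hx hxΩ) a' ha' hadj' heq'
      have hstepd : ∀ x ∈ V, x ∉ Ω →
          (∃ a' ∈ V, Adj x a' ∧ u a' - u x = S * ‖a' - x‖) →
          ∃ b' ∈ V, Adj x b' ∧ u x - u b' = S * ‖b' - x‖ := by
        rintro x hx hxΩ ⟨a', ha', hadj', heq'⟩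
        have hKv : ∀ z : ℝ,
            sSup {r : ℝ | ∃ a'' ∈ V, Adj x a'' ∧ r = |v a'' - v x| / ‖a'' - x‖}
              ≤ sSup {r : ℝ | ∃ a'' ∈ V, Adj x a'' ∧ r = |v a'' - z| / ‖a'' - x‖} := by
          intro z
          have hv1 : ∀ a'' : EuclideanSpace ℝ (Fin n), |v a'' - v x| = |u a'' - u x| := by
            intro a''
            rw [hvdef]
            simp only [neg_sub_neg]
            rw [abs_sub_comm]
          have hv2 : ∀ a'' : EuclideanSpace ℝ (Fin n), |v a'' - z| = |u a'' - (-z)| := by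
            intro a''
            rw [hvdef]
            simp only
            rw [show -(u a'') - z = -(u a'' - (-z)) by ring, abs_neg]
          have e1 : {r : ℝ | ∃ a'' ∈ V, Adj x a'' ∧ r = |v a'' - v x| / ‖a'' - x‖}
              = {r : ℝ | ∃ a'' ∈ V, Adj x a'' ∧ r = |u a'' - u x| / ‖a'' - x‖} :=
            Set.ext fun r => by simp only [hv1]
          have e2 : {r : ℝ | ∃ a'' ∈ V, Adj x a'' ∧ r = |v a'' - z| / ‖a'' - x‖}
              = {r : ℝ | ∃ a'' ∈ V, Adj x a'' ∧ r = |u a'' - (-z)| / ‖a'' - x‖} :=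
            Set.ext fun r => by simp only [hv2]
          rw [e1, e2]
          exact huK x hx hxΩ (-z)
        have heqv : v x - v a' = S * ‖a' - x‖ := by
          rw [hvdef]; simp only; linarith
        obtain ⟨b', hb', hadjb, heqb⟩ :=
          keystep hne v S hSpos hedgev x hx hKv a' ha' hadj' heqv
        refine ⟨b', hb', hadjb, ?_⟩
        rw [hvdef] at heqb
        simp only at heqb
        linarith
      have hn01 : (0:ℝ) < ‖x₁ - x₀‖ := by
        rw [norm_pos_iff, sub_ne_zero]; exact (hne _ _ hadj01).symm
      obtain ⟨p, hpΩ, hup, hpb⟩ := climb hconn hne hsymm Ω u S hSpos hstepu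
        (V.filter fun w => u x₁ < u w).card x₁ hx₁V (le_refl _)
        (Or.inr ⟨x₀, hx₀V, hsymm _ _ hadj01, by rw [norm_sub_rev x₀ x₁]; exact heq01⟩)
      obtain ⟨q, hqΩ, huq, hqb⟩ := climb_desc hconn hne hsymm Ω hΩV u S hSpos hstepd
        (V.filter fun w => u w < u x₀).card x₀ hx₀V (le_refl _)
        (Or.inr ⟨x₁, hx₁V, hadj01, heq01⟩)
      have hqV : q ∈ V := hΩV hqΩ
      have hpV : p ∈ V := hΩV hpΩ
      have hpb' := hpb q hqV
      rw [mul_sub] at hpb'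
      have hext : geodDist V Adj q x₁ ≤ geodDist V Adj q x₀ + ‖x₁ - x₀‖ :=
        geodDist_le_add_edge (chainSet_nonempty hqV (hconn q hqV x₀ hx₀V)) hx₁V hadj01
      have hmul := mul_le_mul_of_nonneg_left hext hSpos.le
      rw [mul_add] at hmul
      have hfinal : S * geodDist V Adj q p ≤ u p - u q := by linarith
      have hpq : q ≠ p := by
        rintro rfl
        nlinarith
      have hdpos : 0 < geodDist V Adj q p := by
        refine lt_of_lt_of_le ?_ (norm_le_geodDist (chainSet_nonempty hqV (hconn q hqV p hpV)))
        rw [norm_pos_iff, sub_ne_zero]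
        exact fun h => hpq h.symm
      have hmem : |f q - f p| / geodDist V Adj q p ∈ Lset :=
        ⟨q, hqΩ, p, hpΩ, hpq, rfl⟩
      have hSr : S ≤ |f q - f p| / geodDist V Adj q p := by
        rw [le_div_iff₀ hdpos, ← huf q hqΩ, ← huf p hpΩ]
        have habs : |u q - u p| = u p - u q := by
          rw [abs_sub_comm, abs_of_nonneg (by nlinarith)]
        rw [habs]
        exact hfinal
      exact le_trans hSr (le_csSup hLbdd hmem)
    have := hSedge a b ha hb hab
    have := mul_le_mul_of_nonneg_right hSL (norm_nonneg (b - a))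
    linarith
  -- conclude
  apply Real.sSup_le _ hL0
  rintro r ⟨x, hx, y, hy, hxy, rfl⟩
  have hchne : (chainSet V Adj x y).Nonempty := chainSet_nonempty hx (hconn x hx y hy)
  have hdpos : 0 < geodDist V Adj x y := by
    refine lt_of_lt_of_le ?_ (norm_le_geodDist hchne)
    rw [norm_pos_iff, sub_ne_zero]
    exact fun h => hxy h.symm
  have hchain : ∀ r' ∈ chainSet V Adj x y, |u y - u x| ≤ L * r' := by
    intro r' hr'
    have := chain_telescope u L hedgeL hr'
    simpa [Real.norm_eq_abs] using this
  have hkey : |u x - u y| ≤ L * geodDist V Adj x y := by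
    rcases hL0.eq_or_lt with hLeq | hLpos
    · obtain ⟨r', hr'⟩ := hchne
      have := hchain r' hr'
      rw [← hLeq] at *
      rw [abs_sub_comm]
      linarith
    · have h1 : ∀ r' ∈ chainSet V Adj x y, |u x - u y| / L ≤ r' := by
        intro r' hr'
        rw [div_le_iff₀ hLpos, abs_sub_comm]
        have := hchain r' hr'
        linarith
      have h2 := le_csInf hchne h1
      rw [geodDist_eq]
      rw [div_le_iff₀ hLpos] at h2
      linarith [h2]
  rw [div_le_iff₀ hdpos]
  linarith
end

section
/- Let G = (V,E,Ω) be a finite connected graph with V ⊂ ℝⁿ (adjacent vertices distinct as points, each vertex of V \ Ω having nonempty neighborhood), Ω ⊆ V nonempty, f : Ω → ℝ, and let u be a Kirszbraun extension of f on G. Then for every x ∈ V, min_{z∈Ω} f(z) ≤ u(x) ≤ max_{z∈Ω} f(z). -/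
/-- Auxiliary: one-sided (maximum) version of the principle. -/
lemma kirszbraun_sup_side (n : ℕ)
    (V : Finset (EuclideanSpace ℝ (Fin n)))
    (Adj : EuclideanSpace ℝ (Fin n) → EuclideanSpace ℝ (Fin n) → Prop)
    (hne : ∀ x y, Adj x y → x ≠ y)
    (hconn : ∀ x ∈ V, ∀ y ∈ V,
      Relation.ReflTransGen (fun a b => a ∈ V ∧ b ∈ V ∧ Adj a b) x y)
    (Ω : Finset (EuclideanSpace ℝ (Fin n))) (hΩ : Ω.Nonempty) (hΩV : Ω ⊆ V)
    (f u : EuclideanSpace ℝ (Fin n) → ℝ)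
    (huf : ∀ z ∈ Ω, u z = f z)
    (huK : ∀ x ∈ V, x ∉ Ω → ∀ z : ℝ,
      sSup {r : ℝ | ∃ a ∈ V, Adj x a ∧ r = |u a - u x| / ‖a - x‖}
        ≤ sSup {r : ℝ | ∃ a ∈ V, Adj x a ∧ r = |u a - z| / ‖a - x‖}) :
    ∀ x ∈ V, u x ≤ Ω.sup' hΩ f := by
  have hV : V.Nonempty := hΩ.mono hΩV
  set M := V.sup' hV u with hM
  have hle : ∀ a ∈ V, u a ≤ M := fun a ha => Finset.le_sup' u ha
  -- Core: a maximizer outside Ω with a strictly smaller neighbour is impossible.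
  have core : ∀ x ∈ V, x ∉ Ω → (∃ b ∈ V, Adj x b ∧ u b < u x) →
      (∀ a ∈ V, u a ≤ u x) → False := by
    rintro x hxV hxΩ ⟨b, hbV, hxb, hub⟩ hmax
    classical
    set N := V.filter (fun a => Adj x a) with hN
    have hbN : b ∈ N := Finset.mem_filter.mpr ⟨hbV, hxb⟩
    have hNne : N.Nonempty := ⟨b, hbN⟩
    have hpos : ∀ a ∈ N, 0 < ‖a - x‖ := by
      intro a ha
      rw [norm_pos_iff, sub_ne_zero]
      exact (hne x a (Finset.mem_filter.mp ha).2).symm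
    have hset : ∀ z : ℝ, {r : ℝ | ∃ a ∈ V, Adj x a ∧ r = |u a - z| / ‖a - x‖}
        = ↑(N.image (fun a => |u a - z| / ‖a - x‖)) := by
      intro z
      ext r
      simp only [Set.mem_setOf_eq, Finset.coe_image, Set.mem_image, Finset.mem_coe,
        hN, Finset.mem_filter]
      constructor
      · rintro ⟨a, haV, hxa, rfl⟩; exact ⟨a, ⟨haV, hxa⟩, rfl⟩
      · rintro ⟨a, ⟨haV, hxa⟩, rfl⟩; exact ⟨a, haV, hxa, rfl⟩
    have hsSup : ∀ z : ℝ, sSup {r : ℝ | ∃ a ∈ V, Adj x a ∧ r = |u a - z| / ‖a - x‖}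
        = (N.image (fun a => |u a - z| / ‖a - x‖)).max' (hNne.image _) := by
      intro z
      rw [hset z]
      exact Finset.Nonempty.csSup_eq_max' _
    set F : ℝ → ℝ := fun z => (N.image (fun a => |u a - z| / ‖a - x‖)).max'
      (hNne.image (fun a => |u a - z| / ‖a - x‖)) with hF
    have hmemF : ∀ z : ℝ, ∀ a ∈ N, |u a - z| / ‖a - x‖ ≤ F z := by
      intro z a ha
      exact Finset.le_max' _ _ (Finset.mem_image_of_mem (fun a => |u a - z| / ‖a - x‖) ha)
    have hFpos : 0 < F (u x) := by
      have h1 : (u x - u b) / ‖b - x‖ ≤ F (u x) := by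
        have := hmemF (u x) b hbN
        rwa [abs_sub_comm, abs_of_nonneg (by linarith : (0:ℝ) ≤ u x - u b)] at this
      have : 0 < (u x - u b) / ‖b - x‖ := div_pos (by linarith) (hpos b hbN)
      linarith
    set dmin := N.inf' hNne (fun a => ‖a - x‖) with hdmin
    have hdpos : 0 < dmin := (Finset.lt_inf'_iff hNne).mpr hpos
    set N' := N.filter (fun a => u a < u x) with hN'
    have hbN' : b ∈ N' := Finset.mem_filter.mpr ⟨hbN, hub⟩
    have hN'ne : N'.Nonempty := ⟨b, hbN'⟩
    set δ := N'.inf' hN'ne (fun a => u x - u a) with hδ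
    have hδpos : 0 < δ := by
      rw [hδ, Finset.lt_inf'_iff]
      intro a ha
      have := (Finset.mem_filter.mp ha).2
      linarith
    set ε := min δ (F (u x) * dmin) / 2 with hε
    have hεpos : 0 < ε := by
      have : 0 < F (u x) * dmin := mul_pos hFpos hdpos
      have := lt_min hδpos this
      rw [hε]; linarith
    -- each term at z = u x - ε is strictly below F (u x)
    have hkey : ∀ a ∈ N, |u a - (u x - ε)| / ‖a - x‖ < F (u x) := by
      intro a ha
      have haV : a ∈ V := (Finset.mem_filter.mp ha).1
      have hauM : u a ≤ u x := hmax a haV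
      have hapos := hpos a ha
      rcases lt_or_eq_of_le hauM with hlt | heq
      · -- u a < u x
        have haN' : a ∈ N' := Finset.mem_filter.mpr ⟨ha, hlt⟩
        have hδa : δ ≤ u x - u a := Finset.inf'_le _ haN'
        have hεlt : ε < u x - u a := by
          have : ε ≤ δ / 2 := by
            rw [hε]
            have := min_le_left δ (F (u x) * dmin)
            linarith
          linarith
        have habs : |u a - (u x - ε)| = u x - u a - ε := by
          rw [abs_sub_comm, abs_of_nonneg (by linarith)]
          ring
        have h2 : |u a - u x| / ‖a - x‖ ≤ F (u x) := hmemF (u x) a ha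
        rw [abs_sub_comm, abs_of_nonneg (by linarith : (0:ℝ) ≤ u x - u a)] at h2
        have h3 : (u x - u a - ε) / ‖a - x‖ < (u x - u a) / ‖a - x‖ :=
          div_lt_div_of_pos_right (by linarith) hapos
        rw [habs]
        linarith
      · -- u a = u x
        have habs : |u a - (u x - ε)| = ε := by
          rw [heq]
          rw [abs_of_nonneg (by linarith : (0:ℝ) ≤ u x - (u x - ε))]
          ring
        rw [habs, div_lt_iff₀ hapos]
        have hda : dmin ≤ ‖a - x‖ := Finset.inf'_le _ ha
        have h1 : ε < F (u x) * dmin := by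
          have : ε ≤ F (u x) * dmin / 2 := by
            rw [hε]
            have := min_le_right δ (F (u x) * dmin)
            linarith
          have : 0 < F (u x) * dmin := mul_pos hFpos hdpos
          linarith [min_le_right δ (F (u x) * dmin)]
        calc ε < F (u x) * dmin := h1
          _ ≤ F (u x) * ‖a - x‖ := by
            exact mul_le_mul_of_nonneg_left hda (le_of_lt hFpos)
    -- hence F (u x - ε) < F (u x)
    have hFlt : F (u x - ε) < F (u x) := by
      obtain ⟨a, haN, hma⟩ := Finset.mem_image.mp
        (Finset.max'_mem (N.image (fun a => |u a - (u x - ε)| / ‖a - x‖)) (hNne.image _))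
      have : F (u x - ε) = |u a - (u x - ε)| / ‖a - x‖ := hma.symm
      rw [this]
      exact hkey a haN
    have := huK x hxV hxΩ (u x - ε)
    rw [hsSup (u x), hsSup (u x - ε)] at this
    exact absurd this (not_le.mpr hFlt)
  -- any maximizer's value is bounded by sup over Ω, via path induction
  obtain ⟨ω, hω⟩ := id hΩ
  have key : ∀ x, Relation.ReflTransGen (fun a b => a ∈ V ∧ b ∈ V ∧ Adj a b) x ω →
      x ∈ V → u x = M → M ≤ Ω.sup' hΩ f := by
    intro x hpath
    induction hpath using Relation.ReflTransGen.head_induction_on with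
    | refl =>
      intro _ hωM
      rw [← hωM, huf ω hω]
      exact Finset.le_sup' f hω
    | @head a c hedge htail ih =>
      intro haV haM
      by_cases haΩ : a ∈ Ω
      · rw [← haM, huf a haΩ]
        exact Finset.le_sup' f haΩ
      · obtain ⟨_, hcV, hac⟩ := hedge
        by_cases hcM : u c = M
        · exact ih hcV hcM
        · have hclt : u c < u a := by
            rw [haM]
            exact lt_of_le_of_ne (hle c hcV) hcM
          exact absurd (core a haV haΩ ⟨c, hcV, hac, hclt⟩
            (fun w hw => haM ▸ hle w hw)) (by simp)
  intro x hxV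
  obtain ⟨x0, hx0V, hx0⟩ := Finset.exists_mem_eq_sup' hV u
  have : M ≤ Ω.sup' hΩ f := key x0 (hconn x0 hx0V ω (hΩV hω)) hx0V hx0.symm
  exact le_trans (hle x hxV) this

/-- maximum principle: if `u` is a Kirszbraun extension of `f : Ω → ℝ` on
the finite connected graph `G = (V, E, Ω)`, then for every `x ∈ V`,
`min_{z ∈ Ω} f z ≤ u x ≤ max_{z ∈ Ω} f z`. -/
theorem kirszbraun_extension_max_principle (n : ℕ)
    (V : Finset (EuclideanSpace ℝ (Fin n)))
    (Adj : EuclideanSpace ℝ (Fin n) → EuclideanSpace ℝ (Fin n) → Prop)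
    (hsymm : ∀ x y, Adj x y → Adj y x)
    (hne : ∀ x y, Adj x y → x ≠ y)
    (hconn : ∀ x ∈ V, ∀ y ∈ V,
      Relation.ReflTransGen (fun a b => a ∈ V ∧ b ∈ V ∧ Adj a b) x y)
    (Ω : Finset (EuclideanSpace ℝ (Fin n))) (hΩ : Ω.Nonempty) (hΩV : Ω ⊆ V)
    (hnbr : ∀ x ∈ V, x ∉ Ω → ∃ y ∈ V, Adj x y)
    (f u : EuclideanSpace ℝ (Fin n) → ℝ)
    -- u is a Kirszbraun extension of f on G
    (huf : ∀ z ∈ Ω, u z = f z)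
    (huK : ∀ x ∈ V, x ∉ Ω → ∀ z : ℝ,
      sSup {r : ℝ | ∃ a ∈ V, Adj x a ∧ r = |u a - u x| / ‖a - x‖}
        ≤ sSup {r : ℝ | ∃ a ∈ V, Adj x a ∧ r = |u a - z| / ‖a - x‖}) :
    ∀ x ∈ V, Ω.inf' hΩ f ≤ u x ∧ u x ≤ Ω.sup' hΩ f := by
  intro x hxV
  constructor
  · -- apply sup side to -u, -f
    have habs : ∀ a z : ℝ, |(-a) - z| = |a - (-z)| := by
      intro a z
      rw [show (-a) - z = -(a - (-z)) by ring, abs_neg]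
    have huK' : ∀ x ∈ V, x ∉ Ω → ∀ z : ℝ,
        sSup {r : ℝ | ∃ a ∈ V, Adj x a ∧ r = |(fun w => -u w) a - (fun w => -u w) x| / ‖a - x‖}
          ≤ sSup {r : ℝ | ∃ a ∈ V, Adj x a ∧ r = |(fun w => -u w) a - z| / ‖a - x‖} := by
      intro y hyV hyΩ z
      simp only [habs, neg_neg]
      exact huK y hyV hyΩ (-z)
    have hsup := kirszbraun_sup_side n V Adj hne hconn Ω hΩ hΩV
      (fun w => -f w) (fun w => -u w)
      (fun z hz => by simp [huf z hz]) huK' x hxV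
    obtain ⟨z, hzΩ, hz⟩ := Finset.le_sup'_iff hΩ |>.mp hsup
    have : f z ≤ u x := by linarith
    exact le_trans (Finset.inf'_le f hzΩ) this
  · exact kirszbraun_sup_side n V Adj hne hconn Ω hΩ hΩV f u huf huK x hxV
end

section
/- Let S = {p₁,…,p_N} ⊂ ℝⁿ be finite, f : S → ℝᵐ, and x ∈ ℝⁿ \ S. Suppose there exist a nonempty subset J ⊆ {1,…,N}, a point f₀ in the convex hull of {f(p_j)}_{j∈J}, and λ₀ > 0 such that ‖f₀ − f(p_j)‖ = λ₀‖x − p_j‖ for all j ∈ J and ‖f₀ − f(p_i)‖ ≤ λ₀‖x − p_i‖ for all i ∈ {1,…,N}. Then λ₀ = λ(f,S)(x) and f₀ = K(f,S)(x). -/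
open RealInnerProductSpace

/-- For a point in the convex hull of a finite set, and any direction, some point of
the set makes a non-acute angle. -/
lemma exists_inner_nonpos {m : ℕ} (s : Finset (EuclideanSpace ℝ (Fin m)))
    (f₀ y : EuclideanSpace ℝ (Fin m)) (h : f₀ ∈ convexHull ℝ (s : Set (EuclideanSpace ℝ (Fin m)))) :
    ∃ z ∈ s, ⟪f₀ - z, f₀ - y⟫ ≤ 0 := by
  rw [Finset.convexHull_eq] at h
  obtain ⟨w, hw0, hw1, hcm⟩ := h
  rw [Finset.centerMass_eq_of_sum_1 _ _ hw1] at hcm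
  by_contra hcon
  push_neg at hcon
  have hsum : ∑ z ∈ s, w z * ⟪f₀ - z, f₀ - y⟫ = 0 := by
    have : ∑ z ∈ s, w z * ⟪f₀ - z, f₀ - y⟫
        = (∑ z ∈ s, w z) * ⟪f₀, f₀ - y⟫ - ⟪∑ z ∈ s, w z • z, f₀ - y⟫ := by
      rw [Finset.sum_mul, sum_inner, ← Finset.sum_sub_distrib]
      congr 1
      ext z
      rw [inner_sub_left, real_inner_smul_left, mul_sub]
    rw [this, hw1]
    simp only [id] at hcm
    rw [hcm, one_mul, sub_self]
  have hterm : ∀ z ∈ s, w z * ⟪f₀ - z, f₀ - y⟫ = 0 :=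
    (Finset.sum_eq_zero_iff_of_nonneg
      (fun z hz => mul_nonneg (hw0 z hz) (le_of_lt (hcon z hz)))).mp hsum
  have hw : ∀ z ∈ s, w z = 0 := by
    intro z hz
    have := hterm z hz
    rcases mul_eq_zero.mp this with h' | h'
    · exact h'
    · exact absurd h' (ne_of_gt (hcon z hz))
  rw [Finset.sum_eq_zero hw] at hw1
  norm_num at hw1

/-- let `S = {p₁, …, p_N} ⊆ ℝⁿ`, `f : S → ℝᵐ`, `x ∈ ℝⁿ \ S`. If there are
a nonempty `J ⊆ {1, …, N}`, a point `f₀` in the convex hull of `{f (p j) : j ∈ J}` and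
`λ₀ > 0` with `‖f₀ - f (p j)‖ = λ₀ ‖x - p j‖` for all `j ∈ J` and
`‖f₀ - f (p i)‖ ≤ λ₀ ‖x - p i‖` for all `i`, then `λ₀ = λ(f,S)(x)` and `f₀ = K(f,S)(x)`
(`f₀` attains the infimum defining `λ(f,S)(x)`). -/
theorem kirszbraun_value_certificate (n m N : ℕ) (hN : 0 < N)
    (p : Fin N → EuclideanSpace ℝ (Fin n)) (hp : Function.Injective p)
    (f : EuclideanSpace ℝ (Fin n) → EuclideanSpace ℝ (Fin m))
    (x : EuclideanSpace ℝ (Fin n)) (hx : x ∉ Set.range p)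
    (J : Finset (Fin N)) (hJ : J.Nonempty)
    (f₀ : EuclideanSpace ℝ (Fin m))
    (hf₀ : f₀ ∈ convexHull ℝ ((fun j => f (p j)) '' (J : Set (Fin N))))
    (lam₀ : ℝ) (hlam₀ : 0 < lam₀)
    (heq : ∀ j ∈ J, ‖f₀ - f (p j)‖ = lam₀ * ‖x - p j‖)
    (hle : ∀ i : Fin N, ‖f₀ - f (p i)‖ ≤ lam₀ * ‖x - p i‖) :
    lam₀ = (⨅ y : EuclideanSpace ℝ (Fin m),
        sSup {r : ℝ | ∃ k : Fin N, r = ‖f (p k) - y‖ / ‖p k - x‖}) ∧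
    sSup {r : ℝ | ∃ k : Fin N, r = ‖f (p k) - f₀‖ / ‖p k - x‖}
      = (⨅ y : EuclideanSpace ℝ (Fin m),
        sSup {r : ℝ | ∃ k : Fin N, r = ‖f (p k) - y‖ / ‖p k - x‖}) := by
  haveI : Nonempty (Fin N) := ⟨⟨0, hN⟩⟩
  have hpx : ∀ k : Fin N, (0 : ℝ) < ‖p k - x‖ := by
    intro k
    rw [norm_pos_iff, sub_ne_zero]
    intro h
    exact hx ⟨k, h⟩
  set Sset : EuclideanSpace ℝ (Fin m) → Set ℝ :=
    fun y => {r : ℝ | ∃ k : Fin N, r = ‖f (p k) - y‖ / ‖p k - x‖} with hSset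
  have hrange : ∀ y, Sset y = Set.range (fun k : Fin N => ‖f (p k) - y‖ / ‖p k - x‖) := by
    intro y; ext r; simp [hSset, eq_comm]
  have hfin : ∀ y, (Sset y).Finite := by
    intro y; rw [hrange]; exact Set.finite_range _
  have hbdd : ∀ y, BddAbove (Sset y) := fun y => (hfin y).bddAbove
  have hne : ∀ y, (Sset y).Nonempty := by
    classical
    intro y
    exact ⟨_, ⟨Classical.arbitrary (Fin N), rfl⟩⟩
  -- Claim A : sSup (Sset f₀) = lam₀
  have claimA : sSup (Sset f₀) = lam₀ := by
    apply le_antisymm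
    · apply csSup_le (hne f₀)
      rintro r ⟨k, rfl⟩
      rw [div_le_iff₀ (hpx k)]
      calc ‖f (p k) - f₀‖ = ‖f₀ - f (p k)‖ := norm_sub_rev _ _
        _ ≤ lam₀ * ‖x - p k‖ := hle k
        _ = lam₀ * ‖p k - x‖ := by rw [norm_sub_rev]
    · obtain ⟨j, hj⟩ := hJ
      have h1 : ‖f (p j) - f₀‖ / ‖p j - x‖ = lam₀ := by
        rw [norm_sub_rev, heq j hj, norm_sub_rev x, mul_div_assoc,
          div_self (ne_of_gt (hpx j)), mul_one]
      rw [← h1]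
      exact le_csSup (hbdd f₀) ⟨j, rfl⟩
  -- Claim B : ∀ y, lam₀ ≤ sSup (Sset y)
  have claimB : ∀ y, lam₀ ≤ sSup (Sset y) := by
    classical
    intro y
    have himg : (fun j => f (p j)) '' (J : Set (Fin N))
        = ((J.image (fun j => f (p j)) : Finset (EuclideanSpace ℝ (Fin m))) : Set _) := by
      rw [Finset.coe_image]
    rw [himg] at hf₀
    obtain ⟨z, hz, hinner⟩ := exists_inner_nonpos _ f₀ y hf₀
    obtain ⟨j, hjJ, rfl⟩ := Finset.mem_image.mp hz
    have hnorm : ‖f (p j) - f₀‖ = lam₀ * ‖p j - x‖ := by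
      rw [norm_sub_rev, heq j hjJ, norm_sub_rev x]
    have hsq : ‖f (p j) - f₀‖ ^ 2 ≤ ‖f (p j) - y‖ ^ 2 := by
      have hdecomp : f (p j) - y = (f (p j) - f₀) + (f₀ - y) := by abel
      have hin : (0 : ℝ) ≤ ⟪f (p j) - f₀, f₀ - y⟫ := by
        have : ⟪f (p j) - f₀, f₀ - y⟫ = - ⟪f₀ - f (p j), f₀ - y⟫ := by
          rw [← inner_neg_left, neg_sub]
        rw [this]
        linarith
      calc ‖f (p j) - f₀‖ ^ 2
          ≤ ‖f (p j) - f₀‖ ^ 2 + 2 * ⟪f (p j) - f₀, f₀ - y⟫ + ‖f₀ - y‖ ^ 2 := by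
            nlinarith [sq_nonneg ‖f₀ - y‖]
        _ = ‖(f (p j) - f₀) + (f₀ - y)‖ ^ 2 := (norm_add_sq_real _ _).symm
        _ = ‖f (p j) - y‖ ^ 2 := by rw [← hdecomp]
    have hle' : ‖f (p j) - f₀‖ ≤ ‖f (p j) - y‖ := by
      have := Real.sqrt_le_sqrt hsq
      rwa [Real.sqrt_sq (norm_nonneg _), Real.sqrt_sq (norm_nonneg _)] at this
    have : lam₀ ≤ ‖f (p j) - y‖ / ‖p j - x‖ := by
      rw [le_div_iff₀ (hpx j)]
      rw [← hnorm]
      exact hle'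
    exact this.trans (le_csSup (hbdd y) ⟨j, rfl⟩)
  have hiInf : (⨅ y : EuclideanSpace ℝ (Fin m), sSup (Sset y)) = lam₀ := by
    apply le_antisymm
    · exact (ciInf_le ⟨lam₀, by rintro r ⟨y, rfl⟩; exact claimB y⟩ f₀).trans_eq claimA
    · exact le_ciInf claimB
  exact ⟨hiInf.symm, claimA.trans hiInf.symm⟩
end
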